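/- arXiv:2311.18289 — 7 statements merged into one kernel-verified Lean document; each statement's English description precedes it below -/
import Mathlib

section
/- Let S ⊆ {1,...,n}^d be a sum-free set and let π : ℤ^d → ℤ^{d-1} be the projection forgetting the last coordinate. Then for any x, y, z ∈ {1,...,n}^{d-1} with x + y = z, we have |S ∩ π⁻¹(x)| + |S ∩ π⁻¹(y)| + |S ∩ π⁻¹(z)| ≤ 2n + 1. -/
open Pointwise

lemma aux_sumfree_fibers (n : ℕ) (A B C : Finset ℤ)
    (hAsub : A ⊆ Finset.Icc (1 : ℤ) n) (hBsub : B ⊆ Finset.Icc (1 : ℤ) n)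
    (hCsub : C ⊆ Finset.Icc (1 : ℤ) n) (hdisj : Disjoint (A + B) C) :
    A.card + B.card + C.card ≤ 2 * n + 1 := by
  have hcardIcc : (Finset.Icc (1 : ℤ) (n : ℤ)).card = n := by
    rw [Int.card_Icc]; simp
  rcases A.eq_empty_or_nonempty with hAe | hAne
  · have h1 := Finset.card_le_card hBsub
    have h2 := Finset.card_le_card hCsub
    simp only [hAe, Finset.card_empty]
    omega
  rcases B.eq_empty_or_nonempty with hBe | hBne
  · have h1 := Finset.card_le_card hAsub
    have h2 := Finset.card_le_card hCsub
    simp only [hBe, Finset.card_empty]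
    omega
  have hcd : A.card + B.card - 1 ≤ (A + B).card :=
    cauchy_davenport_add_of_linearOrder_isCancelAdd hAne hBne
  have hABsub : A + B ⊆ Finset.Icc (1 : ℤ) (2 * n) := by
    intro c hc
    simp only [Finset.mem_add] at hc
    obtain ⟨a, haA, b, hbB, rfl⟩ := hc
    have ha := Finset.mem_Icc.mp (hAsub haA)
    have hb := Finset.mem_Icc.mp (hBsub hbB)
    rw [Finset.mem_Icc]
    push_cast
    omega
  have hCsub' : C ⊆ Finset.Icc (1 : ℤ) (2 * n) := by
    intro c hc
    have h := Finset.mem_Icc.mp (hCsub hc)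
    rw [Finset.mem_Icc]
    push_cast
    omega
  have hunion : ((A + B) ∪ C).card ≤ 2 * n := by
    calc ((A + B) ∪ C).card ≤ (Finset.Icc (1 : ℤ) (2 * n)).card :=
          Finset.card_le_card (Finset.union_subset hABsub hCsub')
      _ = 2 * n := by rw [Int.card_Icc]; push_cast; omega
  rw [Finset.card_union_of_disjoint hdisj] at hunion
  have hAne' := Finset.card_pos.mpr hAne
  omega

/-- For a sum-free `S ⊆ {1,…,n}^{d+1}` and `x + y = z` in `{1,…,n}^d`, the total number
of points of `S` in the three fibers over `x`, `y`, `z` (under the projection forgetting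
the last coordinate) is at most `2n + 1`. -/
theorem stmt1 (d n : ℕ) (S : Finset (Fin (d + 1) → ℤ))
    (hbox : ∀ v ∈ S, ∀ i, 1 ≤ v i ∧ v i ≤ (n : ℤ))
    (hsf : ∀ x ∈ S, ∀ y ∈ S, ∀ z ∈ S, x + y ≠ z)
    (x y z : Fin d → ℤ)
    (hx : ∀ i, 1 ≤ x i ∧ x i ≤ (n : ℤ))
    (hy : ∀ i, 1 ≤ y i ∧ y i ≤ (n : ℤ))
    (hz : ∀ i, 1 ≤ z i ∧ z i ≤ (n : ℤ))
    (hxyz : x + y = z) :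
    (S.filter fun w => (fun i : Fin d => w i.castSucc) = x).card +
      (S.filter fun w => (fun i : Fin d => w i.castSucc) = y).card +
      (S.filter fun w => (fun i : Fin d => w i.castSucc) = z).card ≤ 2 * n + 1 := by
  classical
  set last : (Fin (d + 1) → ℤ) → ℤ := fun w => w (Fin.last d) with hlast
  have hinj : ∀ v : Fin d → ℤ, Set.InjOn last
      ↑(S.filter fun w => (fun i : Fin d => w i.castSucc) = v) := by
    intro v w hw w' hw' h
    simp only [Finset.coe_filter, Set.mem_setOf_eq] at hw hw'
    funext i
    refine Fin.lastCases ?_ ?_ i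
    · exact h
    · intro j
      have h1 := congrFun hw.2 j
      have h2 := congrFun hw'.2 j
      simp_all
  set A := (S.filter fun w => (fun i : Fin d => w i.castSucc) = x).image last with hA
  set B := (S.filter fun w => (fun i : Fin d => w i.castSucc) = y).image last with hB
  set C := (S.filter fun w => (fun i : Fin d => w i.castSucc) = z).image last with hC
  have cardA : (S.filter fun w => (fun i : Fin d => w i.castSucc) = x).card = A.card :=
    (Finset.card_image_of_injOn (hinj x)).symm
  have cardB : (S.filter fun w => (fun i : Fin d => w i.castSucc) = y).card = B.card :=
    (Finset.card_image_of_injOn (hinj y)).symm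
  have cardC : (S.filter fun w => (fun i : Fin d => w i.castSucc) = z).card = C.card :=
    (Finset.card_image_of_injOn (hinj z)).symm
  rw [cardA, cardB, cardC]
  have hAsub : A ⊆ Finset.Icc (1 : ℤ) n := by
    intro a ha
    simp only [hA, Finset.mem_image, Finset.mem_filter] at ha
    obtain ⟨w, ⟨hwS, _⟩, rfl⟩ := ha
    simpa using hbox w hwS (Fin.last d)
  have hBsub : B ⊆ Finset.Icc (1 : ℤ) n := by
    intro a ha
    simp only [hB, Finset.mem_image, Finset.mem_filter] at ha
    obtain ⟨w, ⟨hwS, _⟩, rfl⟩ := ha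
    simpa using hbox w hwS (Fin.last d)
  have hCsub : C ⊆ Finset.Icc (1 : ℤ) n := by
    intro a ha
    simp only [hC, Finset.mem_image, Finset.mem_filter] at ha
    obtain ⟨w, ⟨hwS, _⟩, rfl⟩ := ha
    simpa using hbox w hwS (Fin.last d)
  have hdisj : Disjoint (A + B) C := by
    rw [Finset.disjoint_left]
    intro c hc hcC
    simp only [Finset.mem_add] at hc
    obtain ⟨a, haA, b, hbB, hab⟩ := hc
    simp only [hA, hB, hC, Finset.mem_image, Finset.mem_filter] at haA hbB hcC
    obtain ⟨wa, ⟨hwaS, hwax⟩, rfl⟩ := haA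
    obtain ⟨wb, ⟨hwbS, hwby⟩, rfl⟩ := hbB
    obtain ⟨wc, ⟨hwcS, hwcz⟩, hwcl⟩ := hcC
    refine hsf wa hwaS wb hwbS wc hwcS ?_
    funext i
    refine Fin.lastCases ?_ ?_ i
    · simpa [hlast] using hab.trans hwcl.symm
    · intro j
      have h1 := congrFun hwax j
      have h2 := congrFun hwby j
      have h3 := congrFun hwcz j
      have h4 := congrFun hxyz j
      simp only [Pi.add_apply] at h1 h2 h3 h4 ⊢
      rw [h1, h2, h3, ← h4]
  exact aux_sumfree_fibers n A B C hAsub hBsub hCsub hdisj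
end

section
/- Let S ⊆ [0,1]^d be a measurable sum-free set (no x, y, z ∈ S with x + y = z), and let λ(v) denote the 1-dimensional Lebesgue measure of S ∩ π⁻¹(v) where π : ℝ^d → ℝ^{d-1} forgets the last coordinate. Then for almost every x, y, z ∈ [0,1]^{d-1} with x + y = z, λ(x) + λ(y) + λ(z) ≤ 2. -/
open MeasureTheory

lemma key_lemma (A B C : Set ℝ) (hA : MeasurableSet A) (hB : MeasurableSet B)
    (hAs : A ⊆ Set.Icc 0 1) (hBs : B ⊆ Set.Icc 0 1) (hCs : C ⊆ Set.Icc 0 1)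
    (h : ∀ a ∈ A, ∀ b ∈ B, a + b ∉ C) :
    volume A + volume B + volume C ≤ 2 := by
  have h1 : volume (Set.Icc (0:ℝ) 1) = 1 := by simp [Real.volume_Icc]
  have hA1 : volume A ≤ 1 := h1 ▸ measure_mono hAs
  have hB1 : volume B ≤ 1 := h1 ▸ measure_mono hBs
  have hC1 : volume C ≤ 1 := h1 ▸ measure_mono hCs
  have hAfin : volume A ≠ ⊤ := ne_top_of_le_ne_top (by norm_num) hA1
  have hBfin : volume B ≠ ⊤ := ne_top_of_le_ne_top (by norm_num) hB1
  apply ENNReal.le_of_forall_pos_le_add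
  intro ε hε _
  have hε2 : (ε : ENNReal) / 2 ≠ 0 := by
    simp [ENNReal.div_eq_zero_iff]
    exact_mod_cast hε.ne'
  obtain ⟨K, hKA, hKc, hKv⟩ := hA.exists_isCompact_lt_add hAfin hε2
  obtain ⟨L, hLB, hLc, hLv⟩ := hB.exists_isCompact_lt_add hBfin hε2
  have hhalf : (ε : ENNReal) / 2 + (ε : ENNReal) / 2 = ε := ENNReal.add_halves _
  have hhs : (ε : ENNReal) / 2 ≤ ε := ENNReal.half_le_self
  rcases K.eq_empty_or_nonempty with hKe | hKne
  · rw [hKe] at hKv; simp at hKv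
    calc volume A + volume B + volume C ≤ ↑ε/2 + 1 + 1 :=
          add_le_add (add_le_add hKv.le hB1) hC1
      _ = ↑ε/2 + 2 := by ring
      _ ≤ ↑ε + 2 := by gcongr
      _ = 2 + ↑ε := add_comm _ _
  rcases L.eq_empty_or_nonempty with hLe | hLne
  · rw [hLe] at hLv; simp at hLv
    calc volume A + volume B + volume C ≤ 1 + ↑ε/2 + 1 :=
          add_le_add (add_le_add hA1 hLv.le) hC1
      _ = ↑ε/2 + 2 := by ring
      _ ≤ ↑ε + 2 := by gcongr
      _ = 2 + ↑ε := add_comm _ _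
  -- main case
  set k : ℝ := sSup K with hk
  set l : ℝ := sInf L with hl
  have hkK : k ∈ K := hKc.sSup_mem hKne
  have hlL : l ∈ L := hLc.sInf_mem hLne
  set U1 : Set ℝ := (fun b => k + b) '' L with hU1
  set U2 : Set ℝ := (fun a => a + l) '' K with hU2
  have hU1c : IsCompact U1 := hLc.image (by continuity)
  have hU2c : IsCompact U2 := hKc.image (by continuity)
  have hU1v : volume U1 = volume L := by
    have : U1 = (fun b => -k + b) ⁻¹' L := by
      ext t
      simp only [hU1, Set.mem_image, Set.mem_preimage]
      constructor
      · rintro ⟨b, hb, rfl⟩; simpa using hb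
      · intro ht; exact ⟨-k + t, ht, by ring⟩
    rw [this, measure_preimage_add]
  have hU2v : volume U2 = volume K := by
    have : U2 = (fun a => a + -l) ⁻¹' K := by
      ext t
      simp only [hU2, Set.mem_image, Set.mem_preimage]
      constructor
      · rintro ⟨a, ha, rfl⟩; simpa using ha
      · intro ht; exact ⟨t + -l, ht, by ring⟩
    rw [this, measure_preimage_add_right]
  have hInt : U1 ∩ U2 ⊆ {k + l} := by
    rintro x ⟨⟨b, hb, rfl⟩, ⟨a, ha, hax⟩⟩
    have hak : a ≤ k := le_csSup hKc.bddAbove ha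
    have hlb : l ≤ b := csInf_le hLc.bddBelow hb
    have hax' : a + l = k + b := hax
    have : k + b = k + l := by linarith
    show k + b ∈ ({k + l} : Set ℝ)
    rw [Set.mem_singleton_iff, this]
  have hUsub : U1 ∪ U2 ⊆ Set.Icc (0:ℝ) 2 := by
    rintro x (⟨b, hb, rfl⟩ | ⟨a, ha, rfl⟩)
    · obtain ⟨h1, h2⟩ := hAs (hKA hkK); obtain ⟨h3, h4⟩ := hBs (hLB hb)
      show k + b ∈ Set.Icc (0:ℝ) 2
      exact Set.mem_Icc.mpr ⟨by linarith, by linarith⟩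
    · obtain ⟨h1, h2⟩ := hAs (hKA ha); obtain ⟨h3, h4⟩ := hBs (hLB hlL)
      show a + l ∈ Set.Icc (0:ℝ) 2
      exact Set.mem_Icc.mpr ⟨by linarith, by linarith⟩
  have hCU : C ⊆ Set.Icc (0:ℝ) 2 \ (U1 ∪ U2) := by
    intro c hc
    refine ⟨by obtain ⟨h1, h2⟩ := hCs hc; exact Set.mem_Icc.mpr ⟨by linarith, by linarith⟩, ?_⟩
    rintro (⟨b, hb, hbe⟩ | ⟨a, ha, hae⟩)
    · have hbe' : k + b = c := hbe
      exact h k (hKA hkK) b (hLB hb) (hbe' ▸ hc)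
    · have hae' : a + l = c := hae
      exact h a (hKA ha) l (hLB hlL) (hae' ▸ hc)
  have hUm : MeasurableSet (U1 ∪ U2) := (hU1c.union hU2c).measurableSet
  have hUle2 : volume (U1 ∪ U2) ≤ 2 := by
    have := measure_mono (μ := volume) hUsub
    rwa [Real.volume_Icc, show ENNReal.ofReal (2 - 0) = 2 by norm_num] at this
  have hUfin : volume (U1 ∪ U2) ≠ ⊤ := ne_top_of_le_ne_top (by norm_num) hUle2
  have hKL : volume K + volume L ≤ volume (U1 ∪ U2) := by
    have hint0 : volume (U1 ∩ U2) = 0 :=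
      le_antisymm (le_trans (measure_mono hInt) (by simp)) zero_le
    refine le_of_eq ?_
    calc volume K + volume L = volume U1 + volume U2 := by
          rw [hU1v, hU2v]; ring
      _ = volume (U1 ∪ U2) + volume (U1 ∩ U2) := (measure_union_add_inter U1 hU2c.measurableSet).symm
      _ = volume (U1 ∪ U2) := by rw [hint0, add_zero]
  have hCle : volume C ≤ 2 - volume (U1 ∪ U2) := by
    calc volume C ≤ volume (Set.Icc (0:ℝ) 2 \ (U1 ∪ U2)) := measure_mono hCU
      _ = volume (Set.Icc (0:ℝ) 2) - volume (U1 ∪ U2) :=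
        measure_diff hUsub hUm.nullMeasurableSet hUfin
      _ = 2 - volume (U1 ∪ U2) := by norm_num [Real.volume_Icc]
  calc volume A + volume B + volume C
      ≤ (volume K + ↑ε/2) + (volume L + ↑ε/2) + (2 - volume (U1 ∪ U2)) :=
        add_le_add (add_le_add hKv.le hLv.le) hCle
    _ = (volume K + volume L + (2 - volume (U1 ∪ U2))) + (↑ε/2 + ↑ε/2) := by ring
    _ = (volume K + volume L + (2 - volume (U1 ∪ U2))) + ↑ε := by rw [hhalf]
    _ ≤ (volume (U1 ∪ U2) + (2 - volume (U1 ∪ U2))) + ↑ε := by gcongr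
    _ = 2 + ↑ε := by rw [add_tsub_cancel_of_le hUle2]

/-- If `S ⊆ [0,1]^{d+1}` is a measurable sum-free set and `λ(v)` is the measure of the
fiber of `S` over `v` (projection forgetting the last coordinate), then for almost every
`x, y` with `x`, `y`, `x + y` in `[0,1]^d`, `λ(x) + λ(y) + λ(x+y) ≤ 2`. -/
theorem stmt2 (d : ℕ) (S : Set (Fin (d + 1) → ℝ)) (hSm : MeasurableSet S)
    (hsub : S ⊆ {v | ∀ i, v i ∈ Set.Icc (0 : ℝ) 1})
    (hsf : ∀ x ∈ S, ∀ y ∈ S, ∀ z ∈ S, x + y ≠ z)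
    (lam : (Fin d → ℝ) → ℝ)
    (hlam : ∀ v, lam v = (volume {t ∈ Set.Icc (0 : ℝ) 1 | Fin.snoc v t ∈ S}).toReal) :
    ∀ᵐ p : (Fin d → ℝ) × (Fin d → ℝ) ∂volume,
      (∀ i, p.1 i ∈ Set.Icc (0 : ℝ) 1) → (∀ i, p.2 i ∈ Set.Icc (0 : ℝ) 1) →
      (∀ i, p.1 i + p.2 i ∈ Set.Icc (0 : ℝ) 1) →
      lam p.1 + lam p.2 + lam (p.1 + p.2) ≤ 2 := by
  apply Filter.Eventually.of_forall
  rintro ⟨x, y⟩ hx hy hz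
  set A := {t ∈ Set.Icc (0:ℝ) 1 | Fin.snoc x t ∈ S} with hAdef
  set B := {t ∈ Set.Icc (0:ℝ) 1 | Fin.snoc y t ∈ S} with hBdef
  set C := {t ∈ Set.Icc (0:ℝ) 1 | Fin.snoc (x + y) t ∈ S} with hCdef
  have hsnocm : ∀ v : Fin d → ℝ, Measurable (fun t : ℝ => Fin.snoc v t : ℝ → Fin (d+1) → ℝ) := by
    intro v
    rw [measurable_pi_iff]
    intro i
    refine Fin.lastCases ?_ ?_ i
    · simp only [Fin.snoc_last]; exact measurable_id
    · intro j; simp only [Fin.snoc_castSucc]; exact measurable_const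
  have hAm : MeasurableSet A := measurableSet_Icc.inter ((hsnocm x) hSm)
  have hBm : MeasurableSet B := measurableSet_Icc.inter ((hsnocm y) hSm)
  have hkey : volume A + volume B + volume C ≤ 2 := by
    apply key_lemma A B C hAm hBm (Set.sep_subset _ _) (Set.sep_subset _ _) (Set.sep_subset _ _)
    rintro a ⟨ha01, haS⟩ b ⟨hb01, hbS⟩ ⟨hab01, habS⟩
    apply hsf _ haS _ hbS _ habS
    funext i
    refine Fin.lastCases ?_ ?_ i
    · simp [Fin.snoc_last]
    · intro j; simp [Fin.snoc_castSucc]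
  have hAfin : volume A ≠ ⊤ :=
    ((measure_mono (Set.sep_subset _ _)).trans_lt measure_Icc_lt_top).ne
  have hBfin : volume B ≠ ⊤ :=
    ((measure_mono (Set.sep_subset _ _)).trans_lt measure_Icc_lt_top).ne
  have hCfin : volume C ≠ ⊤ :=
    ((measure_mono (Set.sep_subset _ _)).trans_lt measure_Icc_lt_top).ne
  rw [hlam, hlam, hlam]
  have := ENNReal.toReal_mono (by norm_num) hkey
  rwa [ENNReal.toReal_add (by finiteness) hCfin, ENNReal.toReal_add hAfin hBfin,
    show ((2:ENNReal)).toReal = 2 by norm_num] at this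
end

section
/- Let u₃ = (15 - √15)/10. Then the d = 3 continuous lower bound construction has the claimed volume: the volume of {v ∈ [0,1]³ : u₃ ≤ v₁+v₂+v₃ < 2u₃} equals (10 + √15)/20. -/
open MeasureTheory Set

noncomputable def cl (t : ℝ) : ℝ := max 0 t - max 0 (t - 1)
noncomputable def Cl (t : ℝ) : ℝ := max 0 t ^ 2 / 2 - max 0 (t - 1) ^ 2 / 2
noncomputable def Kl (t : ℝ) : ℝ := max 0 t ^ 3 / 6 - max 0 (t - 1) ^ 3 / 6

lemma hasDerivAt_zero_of_sq_bound {f : ℝ → ℝ} (hf0 : f 0 = 0)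
    (hb : ∀ s : ℝ, |s| < 1 → |f s| ≤ s ^ 2) : HasDerivAt f 0 0 := by
  rw [hasDerivAt_iff_isLittleO, Asymptotics.isLittleO_iff]
  intro c hc
  filter_upwards [Metric.ball_mem_nhds 0 (show (0:ℝ) < min 1 c by positivity)] with s hs
  rw [Metric.mem_ball, Real.dist_eq, sub_zero] at hs
  have hs1 : |s| < 1 := hs.trans_le (min_le_left _ _)
  have hs2 : |s| < c := hs.trans_le (min_le_right _ _)
  have h1 : ‖f s - f 0 - (s - 0) • (0:ℝ)‖ = |f s| := by simp [hf0]
  have h2 : ‖s - (0:ℝ)‖ = |s| := by simp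
  rw [h1, h2]
  calc |f s| ≤ s ^ 2 := hb s hs1
    _ = |s| * |s| := (abs_mul_abs_self s).symm ▸ (sq s ▸ rfl)
    _ ≤ c * |s| := mul_le_mul_of_nonneg_right hs2.le (abs_nonneg s)

lemma hasDerivAt_maxsq (t : ℝ) : HasDerivAt (fun s => max 0 s ^ 2 / 2) (max 0 t) t := by
  rcases lt_trichotomy t 0 with h | rfl | h
  · have he : (fun s : ℝ => max 0 s ^ 2 / 2) =ᶠ[nhds t] fun _ => 0 := by
      filter_upwards [eventually_lt_nhds h] with s hs
      simp [max_eq_left hs.le]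
    rw [he.hasDerivAt_iff]
    simpa [max_eq_left h.le] using (hasDerivAt_const t (0:ℝ))
  · have h0 : max (0:ℝ) 0 = 0 := max_self 0
    rw [h0]
    apply hasDerivAt_zero_of_sq_bound (by simp)
    intro s _
    have h1 : |max 0 s| ≤ |s| := by
      rcases le_total s 0 with h | h
      · simp [max_eq_left h]
      · simp [max_eq_right h]
    have : |max 0 s ^ 2 / 2| = |max 0 s| * |max 0 s| / 2 := by
      rw [abs_div, sq, abs_mul]; norm_num
    rw [this]
    calc |max 0 s| * |max 0 s| / 2 ≤ |s| * |s| / 2 := by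
          gcongr
      _ ≤ |s| * |s| := by nlinarith [mul_nonneg (abs_nonneg s) (abs_nonneg s)]
      _ = s ^ 2 := by rw [abs_mul_abs_self, sq]
  · have he : (fun s : ℝ => max 0 s ^ 2 / 2) =ᶠ[nhds t] fun s => s ^ 2 / 2 := by
      filter_upwards [eventually_gt_nhds h] with s hs
      simp [max_eq_right hs.le]
    rw [he.hasDerivAt_iff, max_eq_right h.le]
    simpa using ((hasDerivAt_pow 2 t).div_const 2)

lemma hasDerivAt_maxcube (t : ℝ) :
    HasDerivAt (fun s => max 0 s ^ 3 / 6) (max 0 t ^ 2 / 2) t := by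
  rcases lt_trichotomy t 0 with h | rfl | h
  · have he : (fun s : ℝ => max 0 s ^ 3 / 6) =ᶠ[nhds t] fun _ => 0 := by
      filter_upwards [eventually_lt_nhds h] with s hs
      simp [max_eq_left hs.le]
    rw [he.hasDerivAt_iff]
    simpa [max_eq_left h.le] using (hasDerivAt_const t (0:ℝ))
  · have h0 : max (0:ℝ) 0 ^ 2 / 2 = 0 := by simp
    rw [h0]
    apply hasDerivAt_zero_of_sq_bound (by simp)
    intro s hs1
    have h1 : |max 0 s| ≤ |s| := by
      rcases le_total s 0 with h | h
      · simp [max_eq_left h]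
      · simp [max_eq_right h]
    have : |max 0 s ^ 3 / 6| = |max 0 s| ^ 3 / 6 := by
      rw [abs_div, abs_pow]; norm_num
    rw [this]
    have habs : (0:ℝ) ≤ |s| := abs_nonneg s
    calc |max 0 s| ^ 3 / 6 ≤ |s| ^ 3 / 6 := by
          gcongr
      _ ≤ s ^ 2 := by nlinarith [sq_abs s]
  · have he : (fun s : ℝ => max 0 s ^ 3 / 6) =ᶠ[nhds t] fun s => s ^ 3 / 6 := by
      filter_upwards [eventually_gt_nhds h] with s hs
      simp [max_eq_right hs.le]
    rw [he.hasDerivAt_iff, max_eq_right h.le]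
    have := (hasDerivAt_pow 3 t).div_const 6
    norm_num at this ⊢
    rw [show t ^ 2 / 2 = 3 * t ^ 2 / 6 by ring]
    exact this

lemma hasDerivAt_Cl (t : ℝ) : HasDerivAt Cl (cl t) t := by
  have h1 := hasDerivAt_maxsq t
  have h2 := (hasDerivAt_maxsq (t - 1)).comp t ((hasDerivAt_id t).sub_const 1)
  have h := h1.sub h2
  have e1 : Cl = (fun s => max 0 s ^ 2 / 2) - (fun s => max 0 s ^ 2 / 2) ∘ fun x => id x - 1 := by
    funext s; simp [Cl]
  have e2 : cl t = max 0 t - max 0 (t - 1) * 1 := by simp [cl]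
  rw [e1, e2]; exact h

lemma hasDerivAt_Kl (t : ℝ) : HasDerivAt Kl (Cl t) t := by
  have h1 := hasDerivAt_maxcube t
  have h2 := (hasDerivAt_maxcube (t - 1)).comp t ((hasDerivAt_id t).sub_const 1)
  have h := h1.sub h2
  have e1 : Kl = (fun s => max 0 s ^ 3 / 6) - (fun s => max 0 s ^ 3 / 6) ∘ fun x => id x - 1 := by
    funext s; simp [Kl]
  have e2 : Cl t = max 0 t ^ 2 / 2 - max 0 (t - 1) ^ 2 / 2 * 1 := by simp [Cl]
  rw [e1, e2]; exact h

lemma cl_continuous : Continuous cl := by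
  unfold cl; fun_prop

lemma Cl_continuous : Continuous Cl := by
  unfold Cl; fun_prop

lemma cl_of_nonpos {t : ℝ} (h : t ≤ 0) : cl t = 0 := by
  simp [cl, max_eq_left h, max_eq_left (by linarith : t - 1 ≤ 0)]

lemma cl_of_mem {t : ℝ} (h0 : 0 ≤ t) (h1 : t ≤ 1) : cl t = t := by
  simp [cl, max_eq_right h0, max_eq_left (by linarith : t - 1 ≤ 0)]

lemma cl_of_ge {t : ℝ} (h : 1 ≤ t) : cl t = 1 := by
  rw [cl, max_eq_right (by linarith : (0:ℝ) ≤ t), max_eq_right (by linarith : (0:ℝ) ≤ t - 1)]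
  ring

lemma cl_eq_min (t : ℝ) : cl t = min 1 (max 0 t) := by
  rcases le_total t 0 with h | h
  · rw [cl_of_nonpos h, max_eq_left h, min_eq_right zero_le_one]
  rcases le_total t 1 with h1 | h1
  · rw [cl_of_mem h h1, max_eq_right h, min_eq_right h1]
  · rw [cl_of_ge h1, max_eq_right h, min_eq_left h1]

lemma cl_mono : Monotone cl := by
  intro a b hab
  rw [cl_eq_min, cl_eq_min]
  exact min_le_min le_rfl (max_le_max le_rfl hab)

lemma cl_nonneg (t : ℝ) : 0 ≤ cl t := by
  rw [cl_eq_min]; exact le_min zero_le_one (le_max_left _ _)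

lemma slice_vol (a b : ℝ) (hab : a ≤ b) :
    volume {z : ℝ | z ∈ Icc (0:ℝ) 1 ∧ a ≤ z ∧ z < b} =
      ENNReal.ofReal (cl b - cl a) := by
  have hsub1 : Ico (max 0 a) (min 1 b) ⊆ {z : ℝ | z ∈ Icc (0:ℝ) 1 ∧ a ≤ z ∧ z < b} := by
    rintro z ⟨hz1, hz2⟩
    exact ⟨⟨le_trans (le_max_left _ _) hz1, (lt_min_iff.mp hz2).1.le⟩,
      le_trans (le_max_right _ _) hz1, (lt_min_iff.mp hz2).2⟩
  have hsub2 : {z : ℝ | z ∈ Icc (0:ℝ) 1 ∧ a ≤ z ∧ z < b} ⊆ Icc (max 0 a) (min 1 b) := by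
    rintro z ⟨⟨h0, h1⟩, h2, h3⟩
    exact ⟨max_le h0 h2, le_min h1 h3.le⟩
  have key : volume {z : ℝ | z ∈ Icc (0:ℝ) 1 ∧ a ≤ z ∧ z < b} =
      ENNReal.ofReal (min 1 b - max 0 a) := by
    refine le_antisymm ?_ ?_
    · calc volume _ ≤ volume (Icc (max 0 a) (min 1 b)) := measure_mono hsub2
        _ = ENNReal.ofReal (min 1 b - max 0 a) := Real.volume_Icc
    · calc ENNReal.ofReal (min 1 b - max 0 a) = volume (Ico (max 0 a) (min 1 b)) :=
            Real.volume_Ico.symm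
        _ ≤ _ := measure_mono hsub1
  rw [key]
  rcases lt_or_ge b 0 with hb | hb
  · have h1 : min 1 b - max 0 a ≤ 0 := by
      have h2 := le_max_left (0:ℝ) a
      have h3 : min 1 b ≤ b := min_le_right _ _
      linarith
    have h2 : cl b - cl a = 0 := by
      rw [cl_of_nonpos hb.le, cl_of_nonpos (hab.trans hb.le)]; ring
    rw [h2, ENNReal.ofReal_eq_zero.mpr h1, ENNReal.ofReal_zero]
  rcases lt_or_ge 1 a with ha | ha
  · have h1 : min 1 b - max 0 a ≤ 0 := by
      have h2 : a ≤ max 0 a := le_max_right _ _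
      have h3 : min 1 b ≤ 1 := min_le_left _ _
      linarith
    have h2 : cl b - cl a = 0 := by
      rw [cl_of_ge (ha.le.trans hab), cl_of_ge ha.le]; ring
    rw [h2, ENNReal.ofReal_eq_zero.mpr h1, ENNReal.ofReal_zero]
  · congr 1
    have hcla : cl a = max 0 a := by
      rcases le_total 0 a with h | h
      · rw [cl_of_mem h ha, max_eq_right h]
      · rw [cl_of_nonpos h, max_eq_left h]
    have hclb : cl b = min 1 b := by rw [cl_eq_min, max_eq_right hb]
    rw [hcla, hclb]

noncomputable def uu : ℝ := (15 - Real.sqrt 15) / 10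

lemma sqrt15_lt : Real.sqrt 15 < 4 := by
  rw [show (4:ℝ) = Real.sqrt 16 by rw [show (16:ℝ) = 4^2 by norm_num, Real.sqrt_sq (by norm_num)]]
  exact Real.sqrt_lt_sqrt (by norm_num) (by norm_num)

lemma sqrt15_gt : 3 < Real.sqrt 15 := by
  rw [show (3:ℝ) = Real.sqrt 9 by rw [show (9:ℝ) = 3^2 by norm_num, Real.sqrt_sq (by norm_num)]]
  exact Real.sqrt_lt_sqrt (by norm_num) (by norm_num)

lemma uu_gt : 1 < uu := by
  have := sqrt15_lt; unfold uu; linarith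

lemma uu_lt : uu < 6/5 := by
  have := sqrt15_gt; unfold uu; linarith

noncomputable def Mm (x : ℝ) : ℝ := ∫ y in (0:ℝ)..1, (cl (2*uu - x - y) - cl (uu - x - y))

lemma Mm_nonneg (x : ℝ) : 0 ≤ Mm x := by
  apply intervalIntegral.integral_nonneg zero_le_one
  intro y _
  have h1 : (0:ℝ) < uu := by have := uu_gt; linarith
  exact sub_nonneg.2 (cl_mono (by linarith))

lemma vol_A2 (x : ℝ) :
    volume {p : ℝ × ℝ | p.1 ∈ Icc (0:ℝ) 1 ∧ p.2 ∈ Icc (0:ℝ) 1 ∧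
        uu ≤ x + p.1 + p.2 ∧ x + p.1 + p.2 < 2*uu} = ENNReal.ofReal (Mm x) := by
  have huu : (0:ℝ) < uu := by have := uu_gt; linarith
  have hmeas : MeasurableSet {p : ℝ × ℝ | p.1 ∈ Icc (0:ℝ) 1 ∧ p.2 ∈ Icc (0:ℝ) 1 ∧
      uu ≤ x + p.1 + p.2 ∧ x + p.1 + p.2 < 2*uu} := by
    apply MeasurableSet.inter
    · exact (measurableSet_Icc).preimage measurable_fst
    apply MeasurableSet.inter
    · exact (measurableSet_Icc).preimage measurable_snd
    apply MeasurableSet.inter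
    · exact measurableSet_le measurable_const
        ((measurable_const.add measurable_fst).add measurable_snd)
    · exact measurableSet_lt ((measurable_const.add measurable_fst).add measurable_snd)
        measurable_const
  rw [Measure.volume_eq_prod, Measure.prod_apply hmeas]
  have hslice : (fun y => (volume : Measure ℝ) (Prod.mk y ⁻¹' {p : ℝ × ℝ | p.1 ∈ Icc (0:ℝ) 1 ∧
      p.2 ∈ Icc (0:ℝ) 1 ∧ uu ≤ x + p.1 + p.2 ∧ x + p.1 + p.2 < 2*uu})) =
      (Icc (0:ℝ) 1).indicator
        (fun y => ENNReal.ofReal (cl (2*uu - x - y) - cl (uu - x - y))) := by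
    funext y
    by_cases hy : y ∈ Icc (0:ℝ) 1
    · rw [indicator_of_mem hy]
      have hset : Prod.mk y ⁻¹' {p : ℝ × ℝ | p.1 ∈ Icc (0:ℝ) 1 ∧ p.2 ∈ Icc (0:ℝ) 1 ∧
          uu ≤ x + p.1 + p.2 ∧ x + p.1 + p.2 < 2*uu} =
          {z : ℝ | z ∈ Icc (0:ℝ) 1 ∧ uu - x - y ≤ z ∧ z < 2*uu - x - y} := by
        ext z
        simp only [mem_preimage, mem_setOf_eq]
        constructor
        · rintro ⟨_, hz, h1, h2⟩; exact ⟨hz, by linarith, by linarith⟩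
        · rintro ⟨hz, h1, h2⟩; exact ⟨hy, hz, by linarith, by linarith⟩
      rw [hset, slice_vol _ _ (by linarith)]
    · rw [indicator_of_notMem hy]
      have hset : Prod.mk y ⁻¹' {p : ℝ × ℝ | p.1 ∈ Icc (0:ℝ) 1 ∧ p.2 ∈ Icc (0:ℝ) 1 ∧
          uu ≤ x + p.1 + p.2 ∧ x + p.1 + p.2 < 2*uu} = (∅ : Set ℝ) := by
        ext z
        simp only [mem_preimage, mem_setOf_eq, mem_empty_iff_false, iff_false]
        rintro ⟨h, _⟩; exact hy h
      rw [hset, measure_empty]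
  rw [hslice, lintegral_indicator measurableSet_Icc]
  have hcont : Continuous (fun y : ℝ => cl (2*uu - x - y) - cl (uu - x - y)) := by
    apply Continuous.sub <;> exact cl_continuous.comp (by fun_prop)
  rw [← ofReal_integral_eq_lintegral_ofReal (hcont.integrableOn_Icc)]
  · rw [Mm, MeasureTheory.integral_Icc_eq_integral_Ioc,
      ← intervalIntegral.integral_of_le zero_le_one]
  · filter_upwards with y
    exact sub_nonneg.2 (cl_mono (by linarith))

lemma integral_cl_comp (d : ℝ) :
    ∫ y in (0:ℝ)..1, cl (d - y) = Cl d - Cl (d - 1) := by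
  rw [intervalIntegral.integral_comp_sub_left cl d, sub_zero]
  exact intervalIntegral.integral_eq_sub_of_hasDerivAt
    (fun t _ => hasDerivAt_Cl t) (cl_continuous.intervalIntegrable _ _)

lemma integral_Cl_comp (d : ℝ) :
    ∫ y in (0:ℝ)..1, Cl (d - y) = Kl d - Kl (d - 1) := by
  rw [intervalIntegral.integral_comp_sub_left Cl d, sub_zero]
  exact intervalIntegral.integral_eq_sub_of_hasDerivAt
    (fun t _ => hasDerivAt_Kl t) (Cl_continuous.intervalIntegrable _ _)

lemma Mm_eq (x : ℝ) :
    Mm x = (Cl (2*uu - x) - Cl (2*uu - x - 1)) - (Cl (uu - x) - Cl (uu - x - 1)) := by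
  have h1 : Continuous (fun y : ℝ => cl (2*uu - x - y)) := cl_continuous.comp (by fun_prop)
  have h2 : Continuous (fun y : ℝ => cl (uu - x - y)) := cl_continuous.comp (by fun_prop)
  rw [Mm, intervalIntegral.integral_sub (h1.intervalIntegrable _ _) (h2.intervalIntegrable _ _),
    integral_cl_comp (2*uu - x), integral_cl_comp (uu - x)]

lemma Mm_continuous : Continuous Mm := by
  have h : Mm = fun x => (Cl (2*uu - x) - Cl (2*uu - x - 1)) - (Cl (uu - x) - Cl (uu - x - 1)) :=
    funext Mm_eq
  rw [h]
  apply Continuous.sub <;> apply Continuous.sub <;> exact Cl_continuous.comp (by fun_prop)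

lemma vol_A :
    volume {p : ℝ × ℝ × ℝ | p.1 ∈ Icc (0:ℝ) 1 ∧ p.2.1 ∈ Icc (0:ℝ) 1 ∧ p.2.2 ∈ Icc (0:ℝ) 1 ∧
        uu ≤ p.1 + p.2.1 + p.2.2 ∧ p.1 + p.2.1 + p.2.2 < 2*uu} =
      ENNReal.ofReal ((Kl (2*uu) - Kl (2*uu - 1)) - (Kl (2*uu - 1) - Kl (2*uu - 1 - 1))
        - ((Kl uu - Kl (uu - 1)) - (Kl (uu - 1) - Kl (uu - 1 - 1)))) := by
  have hsum : Measurable (fun p : ℝ × ℝ × ℝ => p.1 + p.2.1 + p.2.2) :=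
    (measurable_fst.add (measurable_fst.comp measurable_snd)).add
      (measurable_snd.comp measurable_snd)
  have hmeas : MeasurableSet {p : ℝ × ℝ × ℝ | p.1 ∈ Icc (0:ℝ) 1 ∧ p.2.1 ∈ Icc (0:ℝ) 1 ∧
      p.2.2 ∈ Icc (0:ℝ) 1 ∧ uu ≤ p.1 + p.2.1 + p.2.2 ∧ p.1 + p.2.1 + p.2.2 < 2*uu} := by
    apply MeasurableSet.inter
    · exact measurableSet_Icc.preimage measurable_fst
    apply MeasurableSet.inter
    · exact measurableSet_Icc.preimage (measurable_fst.comp measurable_snd)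
    apply MeasurableSet.inter
    · exact measurableSet_Icc.preimage (measurable_snd.comp measurable_snd)
    exact (measurableSet_le measurable_const hsum).inter
      (measurableSet_lt hsum measurable_const)
  rw [Measure.volume_eq_prod, Measure.prod_apply hmeas]
  have hslice : (fun x => (volume : Measure (ℝ × ℝ))
      (Prod.mk x ⁻¹' {p : ℝ × ℝ × ℝ | p.1 ∈ Icc (0:ℝ) 1 ∧ p.2.1 ∈ Icc (0:ℝ) 1 ∧
        p.2.2 ∈ Icc (0:ℝ) 1 ∧ uu ≤ p.1 + p.2.1 + p.2.2 ∧ p.1 + p.2.1 + p.2.2 < 2*uu})) =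
      (Icc (0:ℝ) 1).indicator (fun x => ENNReal.ofReal (Mm x)) := by
    funext x
    by_cases hx : x ∈ Icc (0:ℝ) 1
    · rw [indicator_of_mem hx]
      have hset : Prod.mk x ⁻¹' {p : ℝ × ℝ × ℝ | p.1 ∈ Icc (0:ℝ) 1 ∧ p.2.1 ∈ Icc (0:ℝ) 1 ∧
          p.2.2 ∈ Icc (0:ℝ) 1 ∧ uu ≤ p.1 + p.2.1 + p.2.2 ∧ p.1 + p.2.1 + p.2.2 < 2*uu} =
          {p : ℝ × ℝ | p.1 ∈ Icc (0:ℝ) 1 ∧ p.2 ∈ Icc (0:ℝ) 1 ∧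
            uu ≤ x + p.1 + p.2 ∧ x + p.1 + p.2 < 2*uu} := by
        ext q
        simp only [mem_preimage, mem_setOf_eq]
        constructor
        · rintro ⟨_, h1, h2, h3, h4⟩; exact ⟨h1, h2, h3, h4⟩
        · rintro ⟨h1, h2, h3, h4⟩; exact ⟨hx, h1, h2, h3, h4⟩
      rw [hset, vol_A2]
    · rw [indicator_of_notMem hx]
      have hset : Prod.mk x ⁻¹' {p : ℝ × ℝ × ℝ | p.1 ∈ Icc (0:ℝ) 1 ∧ p.2.1 ∈ Icc (0:ℝ) 1 ∧
          p.2.2 ∈ Icc (0:ℝ) 1 ∧ uu ≤ p.1 + p.2.1 + p.2.2 ∧ p.1 + p.2.1 + p.2.2 < 2*uu} =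
          (∅ : Set (ℝ × ℝ)) := by
        ext q
        simp only [mem_preimage, mem_setOf_eq, mem_empty_iff_false, iff_false]
        rintro ⟨h, _⟩; exact hx h
      rw [hset, measure_empty]
  rw [hslice, lintegral_indicator measurableSet_Icc]
  rw [← ofReal_integral_eq_lintegral_ofReal (Mm_continuous.integrableOn_Icc)
    (Filter.Eventually.of_forall Mm_nonneg)]
  congr 1
  rw [MeasureTheory.integral_Icc_eq_integral_Ioc, ← intervalIntegral.integral_of_le zero_le_one]
  have hcongr : ∀ x ∈ uIcc (0:ℝ) 1, Mm x =
      (Cl (2*uu - x) - Cl (2*uu - 1 - x)) - (Cl (uu - x) - Cl (uu - 1 - x)) := by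
    intro x _
    rw [Mm_eq, show 2*uu - x - 1 = 2*uu - 1 - x from by ring,
      show uu - x - 1 = uu - 1 - x from by ring]
  rw [intervalIntegral.integral_congr hcongr]
  have c1 : Continuous (fun x : ℝ => Cl (2*uu - x)) := Cl_continuous.comp (by fun_prop)
  have c2 : Continuous (fun x : ℝ => Cl (2*uu - 1 - x)) := Cl_continuous.comp (by fun_prop)
  have c3 : Continuous (fun x : ℝ => Cl (uu - x)) := Cl_continuous.comp (by fun_prop)
  have c4 : Continuous (fun x : ℝ => Cl (uu - 1 - x)) := Cl_continuous.comp (by fun_prop)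
  rw [intervalIntegral.integral_sub
      ((show Continuous (fun x : ℝ => Cl (2*uu - x) - Cl (2*uu - 1 - x)) from c1.sub c2).intervalIntegrable _ _)
      ((show Continuous (fun x : ℝ => Cl (uu - x) - Cl (uu - 1 - x)) from c3.sub c4).intervalIntegrable _ _),
    intervalIntegral.integral_sub (c1.intervalIntegrable _ _) (c2.intervalIntegrable _ _),
    intervalIntegral.integral_sub (c3.intervalIntegrable _ _) (c4.intervalIntegrable _ _),
    integral_Cl_comp (2*uu), integral_Cl_comp (2*uu - 1), integral_Cl_comp uu,
    integral_Cl_comp (uu - 1)]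

lemma T_val : (Kl (2*uu) - Kl (2*uu - 1)) - (Kl (2*uu - 1) - Kl (2*uu - 1 - 1))
    - ((Kl uu - Kl (uu - 1)) - (Kl (uu - 1) - Kl (uu - 1 - 1))) = (10 + Real.sqrt 15)/20 := by
  have h1 := uu_gt
  have h2 := uu_lt
  rw [Kl, Kl, Kl, Kl, Kl, Kl]
  rw [max_eq_right (show (0:ℝ) ≤ 2*uu by linarith),
    max_eq_right (show (0:ℝ) ≤ 2*uu - 1 by linarith),
    max_eq_right (show (0:ℝ) ≤ 2*uu - 1 - 1 by linarith),
    max_eq_left (show 2*uu - 1 - 1 - 1 ≤ (0:ℝ) by linarith),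
    max_eq_right (show (0:ℝ) ≤ uu by linarith),
    max_eq_right (show (0:ℝ) ≤ uu - 1 by linarith),
    max_eq_left (show uu - 1 - 1 ≤ (0:ℝ) by linarith),
    max_eq_left (show uu - 1 - 1 - 1 ≤ (0:ℝ) by linarith)]
  have hs : Real.sqrt 15 ^ 2 = 15 := Real.sq_sqrt (by norm_num)
  simp only [uu]
  linear_combination (-(Real.sqrt 15)/600) * hs

/-- With `u₃ = (15 - √15)/10`, the volume of
`{v ∈ [0,1]³ : u₃ ≤ v₁+v₂+v₃ < 2u₃}` equals `(10 + √15)/20`. -/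
theorem stmt3 :
    volume {v : Fin 3 → ℝ | (∀ i, v i ∈ Set.Icc (0 : ℝ) 1) ∧
        (15 - Real.sqrt 15) / 10 ≤ ∑ i, v i ∧
        ∑ i, v i < 2 * ((15 - Real.sqrt 15) / 10)} =
      ENNReal.ofReal ((10 + Real.sqrt 15) / 20) := by
  have hu : (15 - Real.sqrt 15) / 10 = uu := rfl
  rw [hu]
  set S : Set (Fin 3 → ℝ) := {v : Fin 3 → ℝ | (∀ i, v i ∈ Set.Icc (0 : ℝ) 1) ∧
      uu ≤ ∑ i, v i ∧ ∑ i, v i < 2 * uu} with hS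
  have hsum : Measurable (fun v : Fin 3 → ℝ => ∑ i, v i) := by
    apply Finset.measurable_sum
    intro i _
    exact measurable_pi_apply i
  have hSmeas : MeasurableSet S := by
    rw [hS]
    have : {v : Fin 3 → ℝ | (∀ i, v i ∈ Set.Icc (0 : ℝ) 1) ∧
        uu ≤ ∑ i, v i ∧ ∑ i, v i < 2 * uu} =
        (⋂ i, (fun v : Fin 3 → ℝ => v i) ⁻¹' Icc (0:ℝ) 1) ∩
          ((fun v : Fin 3 → ℝ => ∑ i, v i) ⁻¹' Ici uu) ∩
          ((fun v : Fin 3 → ℝ => ∑ i, v i) ⁻¹' Iio (2*uu)) := by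
      ext v
      simp only [mem_setOf_eq, mem_inter_iff, mem_iInter, mem_preimage, mem_Ici, mem_Iio]
      tauto
    rw [this]
    exact ((MeasurableSet.iInter fun i =>
      measurableSet_Icc.preimage (measurable_pi_apply i)).inter
        (measurableSet_Ici.preimage hsum)).inter (measurableSet_Iio.preimage hsum)
  have h1 : MeasurePreserving
      (MeasurableEquiv.piFinSuccAbove (fun _ : Fin 3 => ℝ) 0).symm volume volume :=
    (volume_preserving_piFinSuccAbove (fun _ : Fin 3 => ℝ) 0).symm _
  have h2 : MeasurePreserving
      (Prod.map (id : ℝ → ℝ) (⇑(MeasurableEquiv.finTwoArrow (α := ℝ)).symm))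
      (volume : Measure (ℝ × ℝ × ℝ)) (volume : Measure (ℝ × (Fin 2 → ℝ))) := by
    have h := (MeasurePreserving.id (volume : Measure ℝ)).prod
      ((volume_preserving_finTwoArrow ℝ).symm _)
    rwa [← Measure.volume_eq_prod, ← Measure.volume_eq_prod] at h
  have hE := h1.comp h2
  have hpre := hE.measure_preimage hSmeas.nullMeasurableSet
  rw [← hpre]
  have hsetEq : ((MeasurableEquiv.piFinSuccAbove (fun _ : Fin 3 => ℝ) 0).symm ∘
      Prod.map (id : ℝ → ℝ) (⇑(MeasurableEquiv.finTwoArrow (α := ℝ)).symm)) ⁻¹' S =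
      {p : ℝ × ℝ × ℝ | p.1 ∈ Icc (0:ℝ) 1 ∧ p.2.1 ∈ Icc (0:ℝ) 1 ∧ p.2.2 ∈ Icc (0:ℝ) 1 ∧
        uu ≤ p.1 + p.2.1 + p.2.2 ∧ p.1 + p.2.1 + p.2.2 < 2*uu} := by
    ext p
    obtain ⟨x, y, z⟩ := p
    simp only [hS, mem_preimage, Function.comp_apply, Prod.map_apply, id_eq, mem_setOf_eq,
      MeasurableEquiv.piFinSuccAbove_symm_apply, MeasurableEquiv.finTwoArrow_symm_apply,
      Fin.insertNthEquiv_zero, Fin.consEquiv_apply, Fin.sum_univ_succ, Fin.cons_zero,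
      Fin.cons_succ, Fin.forall_fin_succ, Finset.univ_eq_empty, Finset.sum_empty, add_zero,
      IsEmpty.forall_iff, and_true]
    constructor
    · rintro ⟨⟨ha, hb, hc⟩, hd, he⟩
      refine ⟨ha, hb, hc, by linarith, by linarith⟩
    · rintro ⟨ha, hb, hc, hd, he⟩
      refine ⟨⟨ha, hb, hc⟩, by linarith, by linarith⟩
  rw [hsetEq, vol_A, T_val]
end

section
/- For every d ∈ ℕ with d ≥ 1, the largest sum-free subset of {1,...,n}^d has size at least c*_d n^d + O(n^{d-1}), where c*_d = max over u ∈ [0,d] of the volume of {v ∈ [0,1]^d : u ≤ 𝟙ᵀv < 2u}. -/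
open MeasureTheory ENNReal Pointwise

lemma slab_le (m : ℕ) (R a b : ℝ) :
    volume {v : Fin (m+1) → ℝ | (∀ i, v i ∈ Set.Icc 0 R) ∧ a ≤ ∑ i, v i ∧ ∑ i, v i ≤ b}
      ≤ ENNReal.ofReal (b - a) * ENNReal.ofReal R ^ m := by
  set e := (MeasurableEquiv.piFinSuccAbove (fun _ : Fin (m+1) => ℝ) 0).trans MeasurableEquiv.prodComm with he
  have hmp : MeasurePreserving e (volume : Measure (Fin (m+1) → ℝ))
      ((volume : Measure (Fin m → ℝ)).prod (volume : Measure ℝ)) := by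
    rw [volume_pi]
    exact (Measure.measurePreserving_swap).comp
      (measurePreserving_piFinSuccAbove (fun _ : Fin (m+1) => (volume : Measure ℝ)) 0)
  set T : Set ((Fin m → ℝ) × ℝ) :=
    {p | (∀ j, p.1 j ∈ Set.Icc (0:ℝ) R) ∧ p.2 ∈ Set.Icc (a - ∑ j, p.1 j) (b - ∑ j, p.1 j)} with hT
  have hTeq : T = (Prod.fst ⁻¹' Set.univ.pi fun _ : Fin m => Set.Icc (0:ℝ) R) ∩
      ({p : (Fin m → ℝ) × ℝ | a - ∑ j, p.1 j ≤ p.2} ∩ {p | p.2 ≤ b - ∑ j, p.1 j}) := by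
    ext p; simp [hT, Set.mem_univ_pi, Set.mem_Icc, and_assoc, Pi.le_def, forall_and]
  have hTm : MeasurableSet T := by
    rw [hTeq]
    refine ((MeasurableSet.univ_pi fun j => measurableSet_Icc).preimage measurable_fst).inter
      (MeasurableSet.inter ?_ ?_)
    · exact measurableSet_le (by fun_prop) measurable_snd
    · exact measurableSet_le measurable_snd (by fun_prop)
  have hsub : {v : Fin (m+1) → ℝ | (∀ i, v i ∈ Set.Icc 0 R) ∧ a ≤ ∑ i, v i ∧ ∑ i, v i ≤ b}
      ⊆ e ⁻¹' T := by
    intro v ⟨hbox, h1, h2⟩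
    have hsum : ∑ i, v i = v 0 + ∑ j, v (Fin.succAbove 0 j) := by
      rw [Fin.sum_univ_succAbove v 0]
    refine ⟨fun j => hbox _, ?_, ?_⟩
    · show a - ∑ j, v (Fin.succAbove 0 j) ≤ v 0; linarith
    · show v 0 ≤ b - ∑ j, v (Fin.succAbove 0 j); linarith
  have hslice : ∀ x : Fin m → ℝ, Prod.mk x ⁻¹' T =
      {t : ℝ | (∀ j, x j ∈ Set.Icc (0:ℝ) R) ∧ t ∈ Set.Icc (a - ∑ j, x j) (b - ∑ j, x j)} :=
    fun x => rfl
  calc volume {v : Fin (m+1) → ℝ | (∀ i, v i ∈ Set.Icc 0 R) ∧ a ≤ ∑ i, v i ∧ ∑ i, v i ≤ b}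
      ≤ volume (e ⁻¹' T) := measure_mono hsub
    _ = ((volume : Measure (Fin m → ℝ)).prod (volume : Measure ℝ)) T :=
        hmp.measure_preimage hTm.nullMeasurableSet
    _ = ∫⁻ x, volume (Prod.mk x ⁻¹' T) ∂(volume : Measure (Fin m → ℝ)) := Measure.prod_apply hTm
    _ ≤ ∫⁻ x, (Set.univ.pi fun _ : Fin m => Set.Icc (0:ℝ) R).indicator
          (fun _ => ENNReal.ofReal (b - a)) x ∂(volume : Measure (Fin m → ℝ)) := by
        apply lintegral_mono
        intro x
        show volume (Prod.mk x ⁻¹' T) ≤ _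
        by_cases hx : ∀ j, x j ∈ Set.Icc (0:ℝ) R
        · have hx' : ∀ j, 0 ≤ x j ∧ x j ≤ R := by simpa [Set.mem_Icc] using hx
          have hs2 : Prod.mk x ⁻¹' T = Set.Icc (a - ∑ j, x j) (b - ∑ j, x j) := by
            rw [hslice x]; ext t; simp [Set.mem_Icc, hx']
          rw [hs2, Set.indicator_of_mem (Set.mem_univ_pi.2 hx), Real.volume_Icc]
          exact le_of_eq (by ring_nf)
        · have hs2 : Prod.mk x ⁻¹' T = ∅ := by
            rw [hslice x]; ext t; simp only [Set.mem_setOf_eq, Set.mem_empty_iff_false, iff_false]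
            intro h; exact hx h.1
          simp [hs2]
    _ = ENNReal.ofReal (b - a) * volume (Set.univ.pi fun _ : Fin m => Set.Icc (0:ℝ) R) := by
        rw [lintegral_indicator (MeasurableSet.univ_pi fun j => measurableSet_Icc)]
        exact setLIntegral_const _ _
    _ = ENNReal.ofReal (b - a) * ENNReal.ofReal R ^ m := by
        rw [volume_pi_pi]
        simp [Real.volume_Icc]

/-- The slab `{v ∈ [0,1]^{m+1} : u ≤ 𝟙ᵀv < 2u}`. -/
def slabSet (m : ℕ) (u : ℝ) : Set (Fin (m+1) → ℝ) :=
  {v | (∀ i, v i ∈ Set.Icc (0:ℝ) 1) ∧ u ≤ ∑ i, v i ∧ ∑ i, v i < 2 * u}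

lemma slabSet_le_one (m : ℕ) (u : ℝ) : volume (slabSet m u) ≤ 1 := by
  have h : slabSet m u ⊆ Set.univ.pi fun _ : Fin (m+1) => Set.Icc (0:ℝ) 1 := by
    intro v hv
    exact Set.mem_univ_pi.2 fun i => hv.1 i
  refine le_trans (measure_mono h) ?_
  rw [volume_pi_pi]
  simp [Real.volume_Icc]

lemma slab_lip (m : ℕ) : LipschitzWith 3 (fun u : ℝ => (volume (slabSet m u)).toReal) := by
  have key : ∀ u u' : ℝ, u' ≤ u →
      |(volume (slabSet m u)).toReal - (volume (slabSet m u')).toReal| ≤ 3 * (u - u') := by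
    intro u u' h
    have hd1 : volume (slabSet m u \ slabSet m u') ≤ ENNReal.ofReal (2*u - 2*u') := by
      have hsub : slabSet m u \ slabSet m u' ⊆
          {v : Fin (m+1) → ℝ | (∀ i, v i ∈ Set.Icc 0 1) ∧ 2*u' ≤ ∑ i, v i ∧ ∑ i, v i ≤ 2*u} := by
        rintro v ⟨⟨hb, h1, h2⟩, hnot⟩
        simp only [slabSet, Set.mem_setOf_eq, not_and, not_lt] at hnot
        refine ⟨hb, ?_, le_of_lt h2⟩
        by_contra hc
        push_neg at hc
        exact absurd (hnot hb (by linarith)) (by linarith)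
      calc volume (slabSet m u \ slabSet m u') ≤ _ := measure_mono hsub
        _ ≤ ENNReal.ofReal (2*u - 2*u') * ENNReal.ofReal 1 ^ m := slab_le m 1 _ _
        _ = ENNReal.ofReal (2*u - 2*u') := by simp
    have hd2 : volume (slabSet m u' \ slabSet m u) ≤ ENNReal.ofReal (u - u') := by
      have hsub : slabSet m u' \ slabSet m u ⊆
          {v : Fin (m+1) → ℝ | (∀ i, v i ∈ Set.Icc 0 1) ∧ u' ≤ ∑ i, v i ∧ ∑ i, v i ≤ u} := by
        rintro v ⟨⟨hb, h1, h2⟩, hnot⟩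
        simp only [slabSet, Set.mem_setOf_eq, not_and, not_lt] at hnot
        refine ⟨hb, h1, ?_⟩
        by_contra hc
        push_neg at hc
        exact absurd (hnot hb (by linarith)) (by linarith)
      calc volume (slabSet m u' \ slabSet m u) ≤ _ := measure_mono hsub
        _ ≤ ENNReal.ofReal (u - u') * ENNReal.ofReal 1 ^ m := slab_le m 1 _ _
        _ = ENNReal.ofReal (u - u') := by simp
    have hfin : ∀ w : ℝ, volume (slabSet m w) ≠ ⊤ :=
      fun w => ne_top_of_le_ne_top ENNReal.one_ne_top (slabSet_le_one m w)
    have hA : volume (slabSet m u) ≤ volume (slabSet m u') + ENNReal.ofReal (2*u - 2*u') := by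
      calc volume (slabSet m u) ≤ volume (slabSet m u' ∪ slabSet m u \ slabSet m u') :=
            measure_mono (by intro v hv; by_cases hv' : v ∈ slabSet m u'
                             · exact Or.inl hv'
                             · exact Or.inr ⟨hv, hv'⟩)
        _ ≤ volume (slabSet m u') + volume (slabSet m u \ slabSet m u') := measure_union_le _ _
        _ ≤ _ := add_le_add_right hd1 _
    have hB : volume (slabSet m u') ≤ volume (slabSet m u) + ENNReal.ofReal (u - u') := by
      calc volume (slabSet m u') ≤ volume (slabSet m u ∪ slabSet m u' \ slabSet m u) :=
            measure_mono (by intro v hv; by_cases hv' : v ∈ slabSet m u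
                             · exact Or.inl hv'
                             · exact Or.inr ⟨hv, hv'⟩)
        _ ≤ volume (slabSet m u) + volume (slabSet m u' \ slabSet m u) := measure_union_le _ _
        _ ≤ _ := add_le_add_right hd2 _
    have hA' : (volume (slabSet m u)).toReal ≤ (volume (slabSet m u')).toReal + (2*u - 2*u') := by
      have := ENNReal.toReal_mono (by simp [hfin u']) hA
      rwa [ENNReal.toReal_add (hfin u') ENNReal.ofReal_ne_top,
        ENNReal.toReal_ofReal (by linarith)] at this
    have hB' : (volume (slabSet m u')).toReal ≤ (volume (slabSet m u)).toReal + (u - u') := by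
      have := ENNReal.toReal_mono (by simp [hfin u]) hB
      rwa [ENNReal.toReal_add (hfin u) ENNReal.ofReal_ne_top,
        ENNReal.toReal_ofReal (by linarith)] at this
    rw [abs_sub_le_iff]
    constructor <;> linarith
  apply LipschitzWith.of_dist_le_mul
  intro u u'
  rcases le_total u' u with h | h
  · have h3 : |u - u'| = u - u' := abs_of_nonneg (sub_nonneg.2 h)
    rw [Real.dist_eq, Real.dist_eq, h3]
    simpa using key u u' h
  · have h3 : |u - u'| = u' - u := by rw [abs_sub_comm]; exact abs_of_nonneg (sub_nonneg.2 h)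
    rw [Real.dist_eq, Real.dist_eq, h3, abs_sub_comm]
    simpa using key u' u h

/-- For every `d ≥ 1`, the largest sum-free subset of `{1,…,n}^d` has size at least
`c*_d n^d - O(n^{d-1})`, where `c*_d` is the maximal volume of a slab
`{v ∈ [0,1]^d : u ≤ 𝟙ᵀv < 2u}` over `u ∈ [0,d]`. -/
theorem stmt4 (d : ℕ) (hd : 1 ≤ d) :
    ∃ C : ℝ, ∀ n : ℕ, 1 ≤ n →
      ∃ S : Finset (Fin d → ℤ),
        (∀ v ∈ S, ∀ i, 1 ≤ v i ∧ v i ≤ (n : ℤ)) ∧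
        (∀ x ∈ S, ∀ y ∈ S, ∀ z ∈ S, x + y ≠ z) ∧
        (sSup ((fun u : ℝ =>
            (volume {v : Fin d → ℝ | (∀ i, v i ∈ Set.Icc (0 : ℝ) 1) ∧
              u ≤ ∑ i, v i ∧ ∑ i, v i < 2 * u}).toReal) '' Set.Icc (0 : ℝ) d))
          * (n : ℝ) ^ d - C * (n : ℝ) ^ (d - 1) ≤ (S.card : ℝ) := by
  obtain ⟨m, rfl⟩ : ∃ m, d = m + 1 := ⟨d - 1, (Nat.succ_pred_eq_of_pos hd).symm⟩
  classical
  set F : ℝ → ℝ := fun u : ℝ =>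
    (volume {v : Fin (m+1) → ℝ | (∀ i, v i ∈ Set.Icc (0 : ℝ) 1) ∧
      u ≤ ∑ i, v i ∧ ∑ i, v i < 2 * u}).toReal with hF
  have hlip : LipschitzWith 3 F := slab_lip m
  obtain ⟨u₀, hu₀mem, hu₀max⟩ :=
    (isCompact_Icc (a := (0:ℝ)) (b := ((m+1 : ℕ) : ℝ))).exists_isMaxOn
      (Set.nonempty_Icc.2 (by positivity)) hlip.continuous.continuousOn
  have hsup : sSup (F '' Set.Icc (0:ℝ) ((m+1:ℕ):ℝ)) ≤ F u₀ :=
    Real.sSup_le (by rintro x ⟨u, hu, rfl⟩; exact hu₀max hu) ENNReal.toReal_nonneg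
  refine ⟨(m:ℝ)+1, fun n hn => ?_⟩
  have hn' : (1:ℝ) ≤ n := by exact_mod_cast hn
  have hn0 : (0:ℝ) < n := by linarith
  set S : Finset (Fin (m+1) → ℤ) :=
    Finset.filter (fun v => u₀ * n ≤ ((∑ i, v i : ℤ) : ℝ) ∧ ((∑ i, v i : ℤ) : ℝ) < 2 * u₀ * n)
      (Fintype.piFinset fun _ => Finset.Icc 1 (n:ℤ)) with hS
  refine ⟨S, ?_, ?_, ?_⟩
  · intro v hv i
    rw [hS, Finset.mem_filter, Fintype.mem_piFinset] at hv
    exact Finset.mem_Icc.1 (hv.1 i)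
  · intro x hx y hy z hz hxyz
    rw [hS, Finset.mem_filter] at hx hy hz
    have hsx := hx.2.1; have hsy := hy.2.1; have hsz := hz.2.2
    have h1 : (∑ i, z i : ℤ) = (∑ i, x i) + (∑ i, y i) := by
      rw [← hxyz]; exact Finset.sum_add_distrib
    have h2 : ((∑ i, z i : ℤ) : ℝ) = ((∑ i, x i : ℤ):ℝ) + ((∑ i, y i : ℤ):ℝ) := by
      exact_mod_cast h1
    linarith
  -- volume estimate
  set A : Set (Fin (m+1) → ℝ) := {w | (∀ i, w i ∈ Set.Ioc (0:ℝ) n) ∧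
      u₀ * n ≤ ∑ i, w i ∧ ∑ i, w i ≤ 2 * u₀ * n - (m+1)} with hA
  have hcard : volume A ≤ (S.card : ℝ≥0∞) := by
    have hcover : A ⊆ ⋃ v ∈ S, Set.univ.pi fun i => Set.Ioc ((v i : ℝ) - 1) (v i) := by
      intro w hw
      obtain ⟨hwb, hw1, hw2⟩ := hw
      set v : Fin (m+1) → ℤ := fun i => ⌈w i⌉ with hv
      have hle : ∀ i, w i ≤ (v i : ℝ) := fun i => Int.le_ceil _
      have hlt : ∀ i, (v i : ℝ) < w i + 1 := fun i => Int.ceil_lt_add_one _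
      have hsum_le : ∑ i, w i ≤ ∑ i, (v i : ℝ) := Finset.sum_le_sum fun i _ => hle i
      have hsum_lt : ∑ i, (v i : ℝ) < ∑ i, w i + (m+1) := by
        calc ∑ i, (v i : ℝ) < ∑ i, (w i + 1) :=
            Finset.sum_lt_sum_of_nonempty Finset.univ_nonempty fun i _ => hlt i
          _ = ∑ i, w i + (m+1) := by rw [Finset.sum_add_distrib]; simp
      have hvS : v ∈ S := by
        rw [hS, Finset.mem_filter, Fintype.mem_piFinset]
        refine ⟨fun i => Finset.mem_Icc.2 ⟨?_, ?_⟩, ?_, ?_⟩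
        · exact Int.one_le_ceil_iff.2 (hwb i).1
        · exact Int.ceil_le.2 (hwb i).2
        · push_cast
          linarith
        · push_cast
          linarith
      refine Set.mem_biUnion hvS (Set.mem_univ_pi.2 fun i => ⟨by linarith [hlt i], hle i⟩)
    calc volume A ≤ volume (⋃ v ∈ S, Set.univ.pi fun i => Set.Ioc ((v i : ℝ) - 1) (v i)) :=
          measure_mono hcover
      _ ≤ ∑ v ∈ S, volume (Set.univ.pi fun i => Set.Ioc ((v i : ℝ) - 1) (v i)) :=
          measure_biUnion_finset_le S _
      _ = ∑ _v ∈ S, 1 := by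
          refine Finset.sum_congr rfl fun v _ => ?_
          rw [volume_pi_pi]
          simp [Real.volume_Ioc]
      _ = (S.card : ℝ≥0∞) := by simp
  set B : Set (Fin (m+1) → ℝ) := {w | (∀ i, w i ∈ Set.Icc (0:ℝ) n) ∧
      u₀ * n ≤ ∑ i, w i ∧ ∑ i, w i < 2 * u₀ * n} with hB
  have hBvol : volume B = ENNReal.ofReal ((n:ℝ)^(m+1)) *
      volume {v : Fin (m+1) → ℝ | (∀ i, v i ∈ Set.Icc (0 : ℝ) 1) ∧
        u₀ ≤ ∑ i, v i ∧ ∑ i, v i < 2 * u₀} := by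
    have hBs : B = (n:ℝ) • {v : Fin (m+1) → ℝ | (∀ i, v i ∈ Set.Icc (0 : ℝ) 1) ∧
        u₀ ≤ ∑ i, v i ∧ ∑ i, v i < 2 * u₀} := by
      ext w
      rw [Set.mem_smul_set_iff_inv_smul_mem₀ hn0.ne']
      simp only [hB, Set.mem_setOf_eq, Set.mem_Icc, Pi.smul_apply, smul_eq_mul,
        inv_mul_eq_div, ← Finset.sum_div, le_div_iff₀ hn0, div_le_one hn0, div_lt_iff₀ hn0,
        zero_mul]
    rw [hBs, Measure.addHaar_smul_of_nonneg volume hn0.le]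
    congr 2
    · rw [Module.finrank_fin_fun]
  set D : Set (Fin (m+1) → ℝ) := {w | (∀ i, w i ∈ Set.Icc (0:ℝ) n) ∧
      2 * u₀ * n - (m+1) ≤ ∑ i, w i ∧ ∑ i, w i ≤ 2 * u₀ * n} with hD
  have hDle : volume D ≤ ENNReal.ofReal (((m:ℝ)+1) * (n:ℝ)^m) := by
    calc volume D ≤ ENNReal.ofReal (2*u₀*n - (2*u₀*n - (m+1))) * ENNReal.ofReal (n:ℝ) ^ m :=
        slab_le m n _ _
      _ = ENNReal.ofReal (((m:ℝ)+1) * (n:ℝ)^m) := by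
        rw [← ENNReal.ofReal_pow hn0.le, ← ENNReal.ofReal_mul (by linarith)]
        ring_nf
  have hzero : volume (⋃ i, {w : Fin (m+1) → ℝ | w i = 0}) = 0 := by
    refine measure_iUnion_null fun i => ?_
    have heq : {w : Fin (m+1) → ℝ | w i = 0} =
        Set.univ.pi (fun j => if j = i then ({0}:Set ℝ) else Set.univ) := by
      ext w
      simp only [Set.mem_univ_pi, Set.mem_setOf_eq]
      constructor
      · intro h j; by_cases hj : j = i <;> simp [hj, h]
      · intro h; have := h i; simpa using this
    rw [heq, volume_pi_pi]
    exact Finset.prod_eq_zero (Finset.mem_univ i) (by simp)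
  have hBle : volume B ≤ (S.card : ℝ≥0∞) + ENNReal.ofReal (((m:ℝ)+1) * (n:ℝ)^m) := by
    have hsub : B ⊆ A ∪ (D ∪ ⋃ i, {w : Fin (m+1) → ℝ | w i = 0}) := by
      intro w hw
      obtain ⟨hwb, h1, h2⟩ := hw
      by_cases hth : ∑ i, w i ≤ 2 * u₀ * n - (m+1)
      · by_cases hz : ∃ i, w i = 0
        · obtain ⟨i, hi⟩ := hz
          exact Or.inr (Or.inr (Set.mem_iUnion.2 ⟨i, hi⟩))
        · push_neg at hz
          exact Or.inl ⟨fun i => ⟨lt_of_le_of_ne (hwb i).1 (Ne.symm (hz i)), (hwb i).2⟩, h1, hth⟩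
      · exact Or.inr (Or.inl ⟨hwb, le_of_lt (not_le.1 hth), le_of_lt h2⟩)
    calc volume B ≤ volume (A ∪ (D ∪ ⋃ i, {w : Fin (m+1) → ℝ | w i = 0})) := measure_mono hsub
      _ ≤ volume A + (volume D + volume (⋃ i, {w : Fin (m+1) → ℝ | w i = 0})) :=
          le_trans (measure_union_le _ _) (add_le_add_right (measure_union_le _ _) _)
      _ = volume A + volume D := by rw [hzero, add_zero]
      _ ≤ (S.card : ℝ≥0∞) + ENNReal.ofReal (((m:ℝ)+1) * (n:ℝ)^m) := add_le_add hcard hDle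
  have hmain : F u₀ * (n:ℝ)^(m+1) ≤ (S.card : ℝ) + ((m:ℝ)+1) * (n:ℝ)^m := by
    have hne : ((S.card : ℝ≥0∞) + ENNReal.ofReal (((m:ℝ)+1) * (n:ℝ)^m)) ≠ ⊤ := by
      simp [ENNReal.add_eq_top]
    have hmono := ENNReal.toReal_mono hne hBle
    rw [hBvol, ENNReal.toReal_mul, ENNReal.toReal_ofReal (by positivity),
      ENNReal.toReal_add (ENNReal.natCast_ne_top _) ENNReal.ofReal_ne_top,
      ENNReal.toReal_natCast, ENNReal.toReal_ofReal (by positivity)] at hmono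
    rw [hF]
    dsimp only
    linarith
  simp only [Nat.add_sub_cancel]
  have hstep : sSup (F '' Set.Icc (0:ℝ) ((m+1:ℕ):ℝ)) * (n:ℝ)^(m+1) ≤ F u₀ * (n:ℝ)^(m+1) :=
    mul_le_mul_of_nonneg_right hsup (by positivity)
  push_cast at hstep ⊢
  linarith
end

section
/- Let X₁, ..., X_{2k} be i.i.d. uniform on [0,1] and let f_t^{k,2k} be the conditional density of X₁ + ... + X_k given X₁ + ... + X_{2k} = t. Then f_t^{k,2k} is unimodal with mode t/2: it is nondecreasing on [max(0, t−k), t/2] and nonincreasing on [t/2, min(t, k)]. -/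
open MeasureTheory Set Asymptotics

/-- The Irwin–Hall density: the probability density function of the sum of `k`
independent `Uniform([0,1])` random variables. -/
noncomputable def irwinHall (k : ℕ) (x : ℝ) : ℝ :=
  (∑ j ∈ Finset.range (k + 1),
      (-1 : ℝ) ^ j * (k.choose j : ℝ) * max (x - j) 0 ^ (k - 1)) /
    (Nat.factorial (k - 1))

/-- `f_t^{k,2k}`: the conditional density of `X₁ + ⋯ + X_k` given
`X₁ + ⋯ + X_{2k} = t`, for i.i.d. uniform `X_i` on `[0,1]`. -/
noncomputable def condDensity (k : ℕ) (t x : ℝ) : ℝ :=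
  irwinHall k x * irwinHall k (t - x) / ∫ s : ℝ, irwinHall k s * irwinHall k (t - s)

/-- Four-point log-concavity (total positivity of order 2) property. -/
def TP2 (f : ℝ → ℝ) : Prop :=
  ∀ a b c d : ℝ, a ≤ b → b ≤ c → c ≤ d → a + d = b + c → f a * f d ≤ f b * f c

lemma tp2_of_concave_support (f : ℝ → ℝ) (A B : ℝ) (h0 : ∀ x, 0 ≤ f x)
    (hsupp : ∀ x, f x ≠ 0 → A ≤ x ∧ x ≤ B)
    (hch : ∀ a b d, A ≤ a → a ≤ b → b ≤ d → d ≤ B →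
      (d - b) * f a + (b - a) * f d ≤ (d - a) * f b) : TP2 f := by
  intro a b c d hab hbc hcd hsum
  by_cases ha : f a = 0
  · rw [ha, zero_mul]; exact mul_nonneg (h0 b) (h0 c)
  by_cases hd : f d = 0
  · rw [hd, mul_zero]; exact mul_nonneg (h0 b) (h0 c)
  obtain ⟨hAa, haB⟩ := hsupp a ha
  obtain ⟨hAd, hdB⟩ := hsupp d hd
  rcases eq_or_lt_of_le (hab.trans (hbc.trans hcd)) with h | had
  · have hb : a = b := le_antisymm hab (by linarith)
    have hc : c = d := le_antisymm hcd (by linarith)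
    rw [hb, hc]
  · obtain rfl : d = b + c - a := by linarith
    have h1 := hch a b (b + c - a) hAa hab (by linarith) hdB
    have h2 := hch a c (b + c - a) hAa (hab.trans hbc) (by linarith) hdB
    set u := f a with hu
    set v := f (b + c - a) with hv
    have hP1 : (0:ℝ) ≤ (b + c - a - b) * u + (b - a) * v :=
      add_nonneg (mul_nonneg (by linarith) (h0 a)) (mul_nonneg (by linarith) (h0 _))
    have hP2 : (0:ℝ) ≤ (b + c - a - c) * u + (c - a) * v :=
      add_nonneg (mul_nonneg (by linarith) (h0 a)) (mul_nonneg (by linarith) (h0 _))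
    have hprod : ((b + c - a - b) * u + (b - a) * v) * ((b + c - a - c) * u + (c - a) * v)
        ≤ ((b + c - a - a) * f b) * ((b + c - a - a) * f c) :=
      mul_le_mul h1 h2 hP2 (le_trans hP1 h1)
    have key : (b + c - a - a) ^ 2 * (u * v) ≤ (b + c - a - a) ^ 2 * (f b * f c) := by
      nlinarith [hprod, mul_nonneg (mul_nonneg (sub_nonneg.2 hab)
        (sub_nonneg.2 (hab.trans hbc))) (sq_nonneg (u - v))]
    exact le_of_mul_le_mul_left (by simpa [mul_comm] using key)
      (pow_pos (by linarith : (0:ℝ) < b + c - a - a) 2)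

lemma irwinHall_continuous (k : ℕ) : Continuous (irwinHall k) := by
  unfold irwinHall
  apply Continuous.div_const
  exact continuous_finset_sum _ fun j _ => Continuous.mul (by fun_prop)
    (((continuous_id.sub continuous_const).max continuous_const).pow _)

lemma irwinHall_zero (x : ℝ) : irwinHall 0 x = 1 := by
  simp [irwinHall]

lemma irwinHall_one (x : ℝ) : irwinHall 1 x = 0 := by
  simp [irwinHall, Finset.sum_range_succ]

lemma irwinHall_two (x : ℝ) : irwinHall 2 x = max x 0 - 2 * max (x - 1) 0 + max (x - 2) 0 := by
  simp [irwinHall, Finset.sum_range_succ]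
  ring

noncomputable def T (x : ℝ) : ℝ := max x 0 - 2 * max (x - 1) 0 + max (x - 2) 0

lemma T_nonneg (x : ℝ) : 0 ≤ T x := by
  unfold T
  rw [max_def, max_def, max_def]
  split_ifs <;> linarith

lemma T_supp (x : ℝ) : T x ≠ 0 → (0:ℝ) ≤ x ∧ x ≤ 2 := by
  intro h
  by_contra hc
  push_neg at hc
  apply h
  unfold T
  rw [max_def, max_def, max_def]
  rcases le_or_gt x 0 with h1 | h1
  · split_ifs <;> linarith
  · have h2 := hc (le_of_lt h1)
    split_ifs <;> linarith

lemma T_eval_lo (y : ℝ) (h1 : 0 ≤ y) (h2 : y ≤ 1) : T y = y := by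
  unfold T
  rw [max_eq_left h1, max_eq_right (by linarith : y - 1 ≤ 0),
    max_eq_right (by linarith : y - 2 ≤ 0)]
  ring

lemma T_eval_hi (y : ℝ) (h1 : 1 ≤ y) (h2 : y ≤ 2) : T y = 2 - y := by
  unfold T
  rw [max_eq_left (by linarith : (0:ℝ) ≤ y), max_eq_left (by linarith : (0:ℝ) ≤ y - 1),
    max_eq_right (by linarith : y - 2 ≤ 0)]
  ring

lemma T_chord (a b d : ℝ) (hA : (0:ℝ) ≤ a) (hab : a ≤ b) (hbd : b ≤ d) (hB : d ≤ 2) :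
    (d - b) * T a + (b - a) * T d ≤ (d - a) * T b := by
  rcases le_total b 1 with hb | hb
  · rw [T_eval_lo a hA (by linarith), T_eval_lo b (by linarith) hb]
    rcases le_total d 1 with hd | hd
    · rw [T_eval_lo d (by linarith) hd]; nlinarith
    · rw [T_eval_hi d hd hB]
      nlinarith [mul_nonneg (sub_nonneg.2 hab) (sub_nonneg.2 hd)]
  · rw [T_eval_hi b hb (by linarith), T_eval_hi d (by linarith) hB]
    rcases le_total a 1 with ha | ha
    · rw [T_eval_lo a hA ha]
      nlinarith [mul_nonneg (sub_nonneg.2 hbd) (sub_nonneg.2 ha)]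
    · rw [T_eval_hi a ha (by linarith)]; nlinarith

lemma pascal_sum (n : ℕ) (M : ℕ → ℝ) :
    ∑ j ∈ Finset.range (n + 1), (-1:ℝ) ^ j * (n.choose j : ℝ) * (M j - M (j + 1))
      = ∑ j ∈ Finset.range (n + 2), (-1:ℝ) ^ j * ((n + 1).choose j : ℝ) * M j := by
  have hsplit : ∑ j ∈ Finset.range (n + 1), (-1:ℝ) ^ j * (n.choose j : ℝ) * (M j - M (j + 1))
      = (∑ j ∈ Finset.range (n + 1), (-1:ℝ) ^ j * (n.choose j : ℝ) * M j)
        - ∑ j ∈ Finset.range (n + 1), (-1:ℝ) ^ j * (n.choose j : ℝ) * M (j + 1) := by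
    rw [← Finset.sum_sub_distrib]
    exact Finset.sum_congr rfl fun j _ => by ring
  have htop : (-1:ℝ) ^ (n + 1) * (n.choose (n + 1) : ℝ) * M (n + 1) = 0 := by
    rw [Nat.choose_eq_zero_of_lt (Nat.lt_succ_self n)]
    simp
  have h3 : ∑ i ∈ Finset.range (n + 1), (-1:ℝ) ^ i * (n.choose (i + 1) : ℝ) * M (i + 1)
      = M 0 - ∑ j ∈ Finset.range (n + 1), (-1:ℝ) ^ j * (n.choose j : ℝ) * M j := by
    have h4 := Finset.sum_range_succ' (fun j => (-1:ℝ) ^ j * (n.choose j : ℝ) * M j) (n + 1)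
    have h5 := Finset.sum_range_succ (fun j => (-1:ℝ) ^ j * (n.choose j : ℝ) * M j) (n + 1)
    rw [h5, htop, add_zero] at h4
    have h6 : ∑ i ∈ Finset.range (n + 1), (-1:ℝ) ^ (i + 1) * (n.choose (i + 1) : ℝ) * M (i + 1)
        = -∑ i ∈ Finset.range (n + 1), (-1:ℝ) ^ i * (n.choose (i + 1) : ℝ) * M (i + 1) := by
      rw [← Finset.sum_neg_distrib]
      exact Finset.sum_congr rfl fun i _ => by ring
    rw [h6] at h4
    simp only [pow_zero, Nat.choose_zero_right, Nat.cast_one, one_mul] at h4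
    linarith
  rw [hsplit, Finset.sum_range_succ' (fun j => (-1:ℝ) ^ j * ((n + 1).choose j : ℝ) * M j) (n + 1)]
  have h2 : ∀ i ∈ Finset.range (n + 1), (-1:ℝ) ^ (i + 1) * ((n + 1).choose (i + 1) : ℝ) * M (i + 1)
      = -((-1:ℝ) ^ i * (n.choose i : ℝ) * M (i + 1))
        - (-1:ℝ) ^ i * (n.choose (i + 1) : ℝ) * M (i + 1) := by
    intro i _
    rw [Nat.choose_succ_succ]
    push_cast
    ring
  rw [Finset.sum_congr rfl h2]
  simp only [pow_zero, Nat.choose_zero_right, Nat.cast_one, one_mul]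
  rw [Finset.sum_sub_distrib, Finset.sum_neg_distrib, h3]
  ring

lemma hasDerivAt_relu_pow (m : ℕ) (y : ℝ) :
    HasDerivAt (fun t : ℝ => max t 0 ^ (m + 2)) ((m + 2) * max y 0 ^ (m + 1)) y := by
  rcases lt_trichotomy y 0 with hy | hy | hy
  · have h0 : (fun t : ℝ => max t 0 ^ (m + 2)) =ᶠ[nhds y] fun _ => (0:ℝ) := by
      filter_upwards [IsOpen.mem_nhds isOpen_Iio hy] with t ht
      rw [max_eq_right (le_of_lt ht)]
      simp
    have h := (hasDerivAt_const y (0:ℝ)).congr_of_eventuallyEq h0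
    have hv : ((m:ℝ) + 2) * max y 0 ^ (m + 1) = 0 := by
      rw [max_eq_right (le_of_lt hy)]; simp
    rw [hv]; exact h
  · subst hy
    rw [hasDerivAt_iff_isLittleO]
    simp only [max_self, ne_eq, sub_zero, zero_pow, smul_eq_mul, mul_zero]
    have : (fun t : ℝ => max t 0 ^ (m + 2) - 0 ^ (m + 2) - t * ((m + 2) * 0 ^ (m + 1)))
        = fun t : ℝ => max t 0 ^ (m + 2) := by
      funext t; simp [zero_pow]
    rw [this]
    rw [isLittleO_iff]
    intro c hc
    have hev : ∀ᶠ t in nhds (0:ℝ), |t| < min c 1 := by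
      have := Metric.ball_mem_nhds (0:ℝ) (lt_min hc one_pos)
      filter_upwards [this] with t ht
      simpa [Real.dist_eq] using ht
    filter_upwards [hev] with t ht
    have h1 : |t| ≤ 1 := le_of_lt (lt_of_lt_of_le ht (min_le_right _ _))
    have h2 : |t| ≤ c := le_of_lt (lt_of_lt_of_le ht (min_le_left _ _))
    have hm : max t 0 ≤ |t| := by
      rcases le_total t 0 with h | h
      · rw [max_eq_right h]; positivity
      · rw [max_eq_left h, abs_of_nonneg h]
    have h0m : (0:ℝ) ≤ max t 0 := le_max_right _ _
    calc ‖max t 0 ^ (m + 2)‖ = max t 0 ^ (m + 2) := by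
          rw [Real.norm_eq_abs, abs_of_nonneg (pow_nonneg h0m _)]
      _ ≤ |t| ^ (m + 2) := pow_le_pow_left₀ h0m hm _
      _ = |t| ^ (m + 1) * |t| := by ring
      _ ≤ c * |t| := by
          apply mul_le_mul_of_nonneg_right _ (abs_nonneg t)
          calc |t| ^ (m + 1) ≤ |t| ^ 1 :=
                pow_le_pow_of_le_one (abs_nonneg t) h1 (by omega)
            _ = |t| := pow_one _
            _ ≤ c := h2
      _ = c * ‖t‖ := by rw [Real.norm_eq_abs]
  · have h0 : (fun t : ℝ => max t 0 ^ (m + 2)) =ᶠ[nhds y] fun t => t ^ (m + 2) := by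
      filter_upwards [IsOpen.mem_nhds isOpen_Ioi hy] with t ht
      rw [max_eq_left (le_of_lt ht)]
    have h := (hasDerivAt_pow (m + 2) y).congr_of_eventuallyEq h0
    have hv : ((m:ℝ) + 2) * max y 0 ^ (m + 1) = ((m + 2 : ℕ) : ℝ) * y ^ (m + 2 - 1) := by
      rw [max_eq_left (le_of_lt hy), show m + 2 - 1 = m + 1 by omega]
      push_cast
      ring
    rw [hv]; exact h

lemma relu_int (y : ℝ) (m : ℕ) :
    ∫ u in (0:ℝ)..1, max (y - u) 0 ^ (m + 1)
      = (max y 0 ^ (m + 2) - max (y - 1) 0 ^ (m + 2)) / (m + 2) := by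
  have hder : ∀ u : ℝ, HasDerivAt (fun u : ℝ => -(max (y - u) 0 ^ (m + 2)) / (m + 2))
      (max (y - u) 0 ^ (m + 1)) u := by
    intro u
    have h1 : HasDerivAt (fun u : ℝ => y - u) (-1) u := by
      simpa using (hasDerivAt_id' u).const_sub y
    have h2 := (hasDerivAt_relu_pow m (y - u)).comp u h1
    have h3 := (h2.neg).div_const ((m : ℝ) + 2)
    have : ((m : ℝ) + 2) ≠ 0 := by positivity
    rw [show max (y - u) 0 ^ (m + 1)
        = -(((m : ℝ) + 2) * max (y - u) 0 ^ (m + 1) * -1) / ((m : ℝ) + 2) by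
      rw [eq_div_iff this]; ring]
    exact h3
  have hcont : Continuous fun u : ℝ => max (y - u) 0 ^ (m + 1) := by
    exact (((continuous_const.sub continuous_id).max continuous_const).pow _)
  rw [intervalIntegral.integral_eq_sub_of_hasDerivAt (fun u _ => hder u)
    (hcont.intervalIntegrable 0 1)]
  rw [sub_zero]
  ring

lemma conv_succ (k : ℕ) (x : ℝ) :
    irwinHall (k + 3) x = ∫ u in (0:ℝ)..1, irwinHall (k + 2) (x - u) := by
  have hint : ∀ j : ℕ, ∫ u in (0:ℝ)..1, max (x - u - j) 0 ^ (k + 1)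
      = (max (x - j) 0 ^ (k + 2) - max (x - ((j + 1 : ℕ) : ℝ)) 0 ^ (k + 2)) / (k + 2) := by
    intro j
    have h : (fun u : ℝ => max (x - u - j) 0 ^ (k + 1))
        = fun u : ℝ => max ((x - j) - u) 0 ^ (k + 1) := by
      funext u; ring_nf
    rw [h, relu_int (x - j) k]
    push_cast
    ring_nf
  have hcont : ∀ j : ℕ, Continuous fun u : ℝ => max (x - u - j) 0 ^ (k + 1) := fun j =>
    (((continuous_const.sub continuous_id).sub continuous_const).max continuous_const).pow _
  have hfac : (Nat.factorial (k + 2) : ℝ) = ((k:ℝ) + 2) * (Nat.factorial (k + 1)) := by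
    rw [Nat.factorial_succ]
    push_cast
    ring
  calc irwinHall (k + 3) x
      = (∑ j ∈ Finset.range (k + 4), (-1:ℝ) ^ j * ((k + 3).choose j : ℝ)
          * max (x - j) 0 ^ (k + 2)) / (Nat.factorial (k + 2)) := rfl
    _ = (∑ j ∈ Finset.range (k + 3), (-1:ℝ) ^ j * ((k + 2).choose j : ℝ)
          * (max (x - j) 0 ^ (k + 2) - max (x - ((j + 1 : ℕ) : ℝ)) 0 ^ (k + 2)))
          / (Nat.factorial (k + 2)) := by
        rw [pascal_sum (k + 2) (fun j => max (x - (j:ℝ)) 0 ^ (k + 2))]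
    _ = ∑ j ∈ Finset.range (k + 3), ((-1:ℝ) ^ j * ((k + 2).choose j : ℝ)
          * ∫ u in (0:ℝ)..1, max (x - u - j) 0 ^ (k + 1)) / (Nat.factorial (k + 1)) := by
        rw [Finset.sum_div]
        refine Finset.sum_congr rfl fun j _ => ?_
        rw [hint j, hfac]
        have h2 : ((k:ℝ) + 2) ≠ 0 := by positivity
        have h3 : (Nat.factorial (k + 1) : ℝ) ≠ 0 := by positivity
        field_simp
    _ = ∫ u in (0:ℝ)..1, irwinHall (k + 2) (x - u) := by
        have huf : ∀ u : ℝ, irwinHall (k + 2) (x - u)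
            = (∑ j ∈ Finset.range (k + 3), (-1:ℝ) ^ j * ((k + 2).choose j : ℝ)
                * max (x - u - j) 0 ^ (k + 1)) / (Nat.factorial (k + 1)) := fun u => rfl
        simp only [huf]
        rw [intervalIntegral.integral_div,
          intervalIntegral.integral_finset_sum
            (f := fun j u => (-1:ℝ) ^ j * ((k + 2).choose j : ℝ) * max (x - u - j) 0 ^ (k + 1))
            (fun j _ => ((continuous_const.mul (hcont j)).intervalIntegrable 0 1)),
          ← Finset.sum_div]
        refine congrArg (· / ((Nat.factorial (k+1)):ℝ)) (Finset.sum_congr rfl fun j _ => ?_)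
        rw [intervalIntegral.integral_const_mul]

lemma conv_tp2 (f : ℝ → ℝ) (hc : Continuous f) (h0 : ∀ x, 0 ≤ f x) (h2 : TP2 f) :
    TP2 (fun x => ∫ u in (0:ℝ)..1, f (x - u)) := by
  intro a b c d hab hbc hcd hsum
  set p := b - a with hp
  have hp0 : 0 ≤ p := by simp [hp]; linarith
  have hdc : d = c + p := by simp [hp]; linarith
  -- indicator functions
  set Pb := (Icc (0:ℝ) 1).indicator (fun z => f (b - z)) with hPb
  set Pd := (Icc (0:ℝ) 1).indicator (fun z => f (d - z)) with hPd
  set Qb := (Icc p (1+p)).indicator (fun z => f (b - z)) with hQb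
  set Qd := (Icc p (1+p)).indicator (fun z => f (d - z)) with hQd
  -- integrability
  have intA : ∀ r : ℝ, Integrable ((Icc (0:ℝ) 1).indicator (fun z => f (r - z))) := by
    intro r
    rw [integrable_indicator_iff measurableSet_Icc]
    exact (hc.comp (continuous_const.sub continuous_id)).integrableOn_Icc
  have intB : ∀ r : ℝ, Integrable ((Icc p (1+p)).indicator (fun z => f (r - z))) := by
    intro r
    rw [integrable_indicator_iff measurableSet_Icc]
    exact (hc.comp (continuous_const.sub continuous_id)).integrableOn_Icc
  -- values of the integrals
  have hIA : ∀ r : ℝ, ∫ z, (Icc (0:ℝ) 1).indicator (fun z => f (r - z)) z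
      = ∫ u in (0:ℝ)..1, f (r - u) := by
    intro r
    rw [integral_indicator measurableSet_Icc, integral_Icc_eq_integral_Ioc,
      intervalIntegral.integral_of_le zero_le_one]
  have hIB : ∀ r : ℝ, ∫ z, (Icc p (1+p)).indicator (fun z => f (r - z)) z
      = ∫ u in (0:ℝ)..1, f ((r - p) - u) := by
    intro r
    have e : (Icc p (1+p)).indicator (fun z => f (r - z))
        = fun z => (Icc (0:ℝ) 1).indicator (fun w => f ((r - p) - w)) (z - p) := by
      funext z
      by_cases hz : z ∈ Icc p (1+p)
      · rw [indicator_of_mem hz]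
        have hz' : z - p ∈ Icc (0:ℝ) 1 := ⟨by linarith [hz.1], by linarith [hz.2]⟩
        rw [indicator_of_mem hz']
        congr 1
        ring
      · rw [indicator_of_notMem hz]
        have hz' : z - p ∉ Icc (0:ℝ) 1 := by
          intro hmem
          exact hz ⟨by linarith [hmem.1], by linarith [hmem.2]⟩
        rw [indicator_of_notMem hz']
    rw [e, integral_sub_right_eq_self ((Icc (0:ℝ) 1).indicator (fun w => f ((r - p) - w))) p]
    exact hIA (r - p)
  -- pointwise nonnegativity of the Cauchy–Binet integrand
  have hIpt : ∀ z w : ℝ, 0 ≤ Pb z * Qd w - Qb z * Pd w - Pd z * Qb w + Qd z * Pb w := by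
    have haux : ∀ z w : ℝ, z ≤ w →
        0 ≤ Pb z * Qd w - Qb z * Pd w - Pd z * Qb w + Qd z * Pb w := by
      intro z w hzw
      have hswap : z ∈ Icc p (1+p) → w ∈ Icc (0:ℝ) 1 →
          z ∈ Icc (0:ℝ) 1 ∧ w ∈ Icc p (1+p) := by
        intro hz hw
        exact ⟨⟨le_trans hp0 hz.1, le_trans hzw hw.2⟩,
          ⟨le_trans hz.1 hzw, by linarith [hw.2]⟩⟩
      have htp : f (b - w) * f (d - z) ≤ f (b - z) * f (d - w) := by
        rcases le_total (b - z) (d - w) with hbd | hbd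
        · exact h2 (b - w) (b - z) (d - w) (d - z) (by linarith) hbd (by linarith) (by ring)
        · have := h2 (b - w) (d - w) (b - z) (d - z) (by linarith) hbd (by linarith) (by ring)
          linarith [this]
      by_cases hzA : z ∈ Icc (0:ℝ) 1
      · by_cases hwB : w ∈ Icc p (1+p)
        · by_cases hzB : z ∈ Icc p (1+p)
          · by_cases hwA : w ∈ Icc (0:ℝ) 1
            · simp only [hPb, hPd, hQb, hQd, indicator_of_mem hzA, indicator_of_mem hwB,
                indicator_of_mem hzB, indicator_of_mem hwA]
              linarith
            · simp only [hPb, hPd, hQb, hQd, indicator_of_mem hzA, indicator_of_mem hwB,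
                indicator_of_mem hzB, indicator_of_notMem hwA, mul_zero, zero_mul]
              linarith [htp]
          · simp only [hPb, hPd, hQb, hQd, indicator_of_mem hzA, indicator_of_mem hwB,
              indicator_of_notMem hzB, mul_zero, zero_mul]
            linarith [htp]
        · by_cases hzB : z ∈ Icc p (1+p)
          · by_cases hwA : w ∈ Icc (0:ℝ) 1
            · exact absurd (hswap hzB hwA).2 hwB
            · simp [hPb, hPd, hQb, hQd, indicator_of_notMem hwB, indicator_of_notMem hwA]
          · simp [hPb, hPd, hQb, hQd, indicator_of_notMem hwB, indicator_of_notMem hzB]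
      · by_cases hzB : z ∈ Icc p (1+p)
        · by_cases hwA : w ∈ Icc (0:ℝ) 1
          · exact absurd (hswap hzB hwA).1 hzA
          · simp [hPb, hPd, hQb, hQd, indicator_of_notMem hzA, indicator_of_notMem hwA]
        · simp [hPb, hPd, hQb, hQd, indicator_of_notMem hzA, indicator_of_notMem hzB]
    intro z w
    rcases le_total z w with h | h
    · exact haux z w h
    · have := haux w z h
      linarith [this]
  -- the four 1-D integrals
  set iPb := ∫ z, Pb z with hiPb
  set iPd := ∫ z, Pd z with hiPd
  set iQb := ∫ z, Qb z with hiQb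
  set iQd := ∫ z, Qd z with hiQd
  have IPb : Integrable Pb := intA b
  have IPd : Integrable Pd := intA d
  have IQb : Integrable Qb := intB b
  have IQd : Integrable Qd := intB d
  -- inner integral computation
  have hK : ∀ z : ℝ, ∫ w, (Pb z * Qd w - Qb z * Pd w - Pd z * Qb w + Qd z * Pb w)
      = Pb z * iQd - Qb z * iPd - Pd z * iQb + Qd z * iPb := by
    intro z
    have i1 : Integrable (fun w => Pb z * Qd w - Qb z * Pd w) :=
      (IQd.const_mul _).sub (IPd.const_mul _)
    have i2 : Integrable (fun w => Pb z * Qd w - Qb z * Pd w - Pd z * Qb w) :=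
      i1.sub (IQb.const_mul _)
    rw [integral_add i2 (IPb.const_mul _), integral_sub i1 (IQb.const_mul _),
      integral_sub (IQd.const_mul _) (IPd.const_mul _),
      integral_const_mul, integral_const_mul, integral_const_mul, integral_const_mul]
  -- outer integral
  have houter : ∫ z, (Pb z * iQd - Qb z * iPd - Pd z * iQb + Qd z * iPb)
      = iPb * iQd - iQb * iPd - iPd * iQb + iQd * iPb := by
    have i1 : Integrable (fun z => Pb z * iQd - Qb z * iPd) :=
      (IPb.mul_const _).sub (IQb.mul_const _)
    have i2 : Integrable (fun z => Pb z * iQd - Qb z * iPd - Pd z * iQb) :=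
      i1.sub (IPd.mul_const _)
    rw [integral_add i2 (IQd.mul_const _), integral_sub i1 (IPd.mul_const _),
      integral_sub (IPb.mul_const _) (IQb.mul_const _),
      integral_mul_const, integral_mul_const, integral_mul_const, integral_mul_const]
  have hnn : 0 ≤ iPb * iQd - iQb * iPd - iPd * iQb + iQd * iPb := by
    rw [← houter]
    apply integral_nonneg
    intro z
    simp only [Pi.zero_apply]
    have h' : (0:ℝ) ≤ ∫ w, (Pb z * Qd w - Qb z * Pd w - Pd z * Qb w + Qd z * Pb w) :=
      integral_nonneg fun w => hIpt z w
    rw [hK z] at h'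
    exact h' 
  -- identify the integrals
  have e1 : iPb = ∫ u in (0:ℝ)..1, f (b - u) := hIA b
  have e2 : iPd = ∫ u in (0:ℝ)..1, f (d - u) := hIA d
  have e3 : iQb = ∫ u in (0:ℝ)..1, f (a - u) := by
    rw [hiQb, hQb, hIB b]
    congr 1
    funext u
    congr 1
    rw [hp]
    ring
  have e4 : iQd = ∫ u in (0:ℝ)..1, f (c - u) := by
    rw [hiQd, hQd, hIB d]
    congr 1
    funext u
    congr 1
    rw [hdc]
    ring
  rw [e1, e2, e3, e4] at hnn
  dsimp only
  nlinarith [hnn]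


lemma irwinHall_good (n : ℕ) : (∀ x, 0 ≤ irwinHall n x) ∧ TP2 (irwinHall n) := by
  have h2 : ∀ m : ℕ, (∀ x, 0 ≤ irwinHall (m + 2) x) ∧ TP2 (irwinHall (m + 2)) := by
    intro m
    induction m with
    | zero =>
      have hT : irwinHall 2 = T := funext irwinHall_two
      rw [hT]
      exact ⟨T_nonneg, tp2_of_concave_support T 0 2 T_nonneg T_supp T_chord⟩
    | succ m ih =>
      have heq : irwinHall (m + 3) = fun x => ∫ u in (0:ℝ)..1, irwinHall (m + 2) (x - u) :=
        funext fun x => conv_succ m x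
      have hgoal : (∀ x, 0 ≤ irwinHall (m + 3) x) ∧ TP2 (irwinHall (m + 3)) := by
        rw [heq]
        constructor
        · intro x
          exact intervalIntegral.integral_nonneg zero_le_one fun u _ => ih.1 _
        · exact conv_tp2 _ (irwinHall_continuous _) ih.1 ih.2
      exact hgoal
  match n with
  | 0 =>
    refine ⟨fun x => by rw [irwinHall_zero]; norm_num, ?_⟩
    intro a b c d _ _ _ _
    simp [irwinHall_zero]
  | 1 =>
    refine ⟨fun x => by rw [irwinHall_one], ?_⟩
    intro a b c d _ _ _ _
    simp [irwinHall_one]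
  | (m + 2) => exact h2 m

/-- `f_t^{k,2k}` is unimodal with mode `t/2`: nondecreasing on `[max(0, t−k), t/2]` and
nonincreasing on `[t/2, min(t, k)]`. -/
theorem stmt6 (k : ℕ) (hk : 1 ≤ k) (t : ℝ) (ht : t ∈ Set.Ioo (0 : ℝ) (2 * k)) :
    MonotoneOn (condDensity k t) (Set.Icc (max 0 (t - k)) (t / 2)) ∧
      AntitoneOn (condDensity k t) (Set.Icc (t / 2) (min t k)) := by
  obtain ⟨hpos, htp2⟩ := irwinHall_good k
  have hc : 0 ≤ ∫ s : ℝ, irwinHall k s * irwinHall k (t - s) :=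
    integral_nonneg fun s => mul_nonneg (hpos s) (hpos _)
  constructor
  · intro x hx y hy hxy
    have hnum : irwinHall k x * irwinHall k (t - x) ≤ irwinHall k y * irwinHall k (t - y) :=
      htp2 x y (t - y) (t - x) hxy (by linarith [hy.2]) (by linarith) (by ring)
    unfold condDensity
    rw [div_eq_mul_inv, div_eq_mul_inv]
    exact mul_le_mul_of_nonneg_right hnum (inv_nonneg.2 hc)
  · intro x hx y hy hxy
    have h' : irwinHall k (t - y) * irwinHall k y ≤ irwinHall k (t - x) * irwinHall k x :=
      htp2 (t - y) (t - x) x y (by linarith) (by linarith [hx.1]) hxy (by ring)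
    have hnum : irwinHall k y * irwinHall k (t - y) ≤ irwinHall k x * irwinHall k (t - x) := by
      calc irwinHall k y * irwinHall k (t - y) = irwinHall k (t - y) * irwinHall k y :=
            mul_comm _ _
        _ ≤ irwinHall k (t - x) * irwinHall k x := h'
        _ = irwinHall k x * irwinHall k (t - x) := mul_comm _ _
    unfold condDensity
    rw [div_eq_mul_inv, div_eq_mul_inv]
    exact mul_le_mul_of_nonneg_right hnum (inv_nonneg.2 hc)
end

section
/- Let a, b, c ∈ [0, d] and x, y, z ∈ [0,1]^d satisfy a + b = c and x + y = z. Define the simplices Σ(t, v) = conv{(t/d)𝟙, v, σ(v), ..., σ^{d−1}(v)} where σ is the cyclic coordinate shift. Then the uniform distributions (Unif(Σ(a,x)), Unif(Σ(b,y)), Unif(Σ(c,z))) are compatible: there is a coupling (X, Y, Z) with these marginals and X + Y = Z almost surely. -/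
open MeasureTheory

/-- A triple of distributions `(μ₁, μ₂, μ₃)` is compatible if there is a coupling
`(X₁, X₂, X₃)` with these marginals such that `X₁ + X₂ = X₃` almost surely. -/
def Compatible {α : Type*} [MeasurableSpace α] [Add α] (μ₁ μ₂ μ₃ : Measure α) : Prop :=
  ∃ ρ : Measure (α × α × α),
    IsProbabilityMeasure ρ ∧
    ρ.map (fun p => p.1) = μ₁ ∧
    ρ.map (fun p => p.2.1) = μ₂ ∧
    ρ.map (fun p => p.2.2) = μ₃ ∧
    ∀ᵐ p ∂ρ, p.1 + p.2.1 = p.2.2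

/-- The cyclic coordinate shift `σ : (v₁,…,v_d) ↦ (v₂,…,v_d,v₁)`. -/
def cyclicShift (d : ℕ) [NeZero d] (v : Fin d → ℝ) : Fin d → ℝ := fun j => v (j + 1)

/-- The simplex `Σ(t, v) = conv{(t/d)·𝟙, v, σ(v), …, σ^{d−1}(v)}`. -/
noncomputable def simplexSet (d : ℕ) [NeZero d] (t : ℝ) (v : Fin d → ℝ) :
    Set (Fin d → ℝ) :=
  convexHull ℝ (insert (fun _ => t / d) (Set.range fun i : Fin d => (cyclicShift d)^[i] v))

/-- The uniform probability measure on a set of positive finite volume. -/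
noncomputable def uniformOnSet (d : ℕ) (s : Set (Fin d → ℝ)) : Measure (Fin d → ℝ) :=
  (volume s)⁻¹ • volume.restrict s

section Aux
variable (d : ℕ)

/-- The linear part of the barycentric parametrization. -/
noncomputable def vertL (v0 : Fin d → ℝ) (w : Fin d → Fin d → ℝ) :
    (Fin d → ℝ) →ₗ[ℝ] (Fin d → ℝ) :=
  ∑ i : Fin d, (LinearMap.proj i : ((Fin d → ℝ)) →ₗ[ℝ] ℝ).smulRight (w i - v0)

/-- The barycentric parametrization of the simplex with vertices `v0, w i`. -/
noncomputable def vertAff (v0 : Fin d → ℝ) (w : Fin d → Fin d → ℝ) :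
    (Fin d → ℝ) →ᵃ[ℝ] (Fin d → ℝ) where
  toFun := fun p => v0 + vertL d v0 w p
  linear := vertL d v0 w
  map_vadd' := by
    intro p v
    simp only [vadd_eq_add, map_add]
    abel

lemma vertAff_apply (v0 : Fin d → ℝ) (w : Fin d → Fin d → ℝ) (p : Fin d → ℝ) :
    vertAff d v0 w p = v0 + vertL d v0 w p := rfl

lemma vertL_apply (v0 : Fin d → ℝ) (w : Fin d → Fin d → ℝ) (p : Fin d → ℝ) :
    vertL d v0 w p = ∑ i : Fin d, p i • (w i - v0) := by
  simp [vertL]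

lemma vertL_single (v0 : Fin d → ℝ) (w : Fin d → Fin d → ℝ) (i : Fin d) :
    vertL d v0 w (Pi.single i 1) = w i - v0 := by
  rw [vertL_apply, Finset.sum_eq_single i]
  · simp
  · intro j _ hj; simp [Pi.single_apply, hj]
  · simp

lemma vertAff_single (v0 : Fin d → ℝ) (w : Fin d → Fin d → ℝ) (i : Fin d) :
    vertAff d v0 w (Pi.single i 1) = w i := by
  rw [vertAff_apply, vertL_single]; abel

lemma vertAff_zero (v0 : Fin d → ℝ) (w : Fin d → Fin d → ℝ) :
    vertAff d v0 w 0 = v0 := by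
  simp [vertAff_apply]

/-- The standard corner simplex. -/
noncomputable def stdCorner : Set (Fin d → ℝ) :=
  convexHull ℝ (insert 0 (Set.range fun i : Fin d => Pi.single i (1:ℝ)))

lemma image_stdCorner (v0 : Fin d → ℝ) (w : Fin d → Fin d → ℝ) :
    vertAff d v0 w '' stdCorner d = convexHull ℝ (insert v0 (Set.range w)) := by
  rw [stdCorner, AffineMap.image_convexHull, Set.image_insert_eq, vertAff_zero,
    ← Set.range_comp]
  exact congrArg (convexHull ℝ) (congrArg (insert v0)
    (congrArg Set.range (funext fun i => vertAff_single d v0 w i)))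

lemma det_ne_zero (v0 : Fin d → ℝ) (w : Fin d → Fin d → ℝ)
    (h : (interior (convexHull ℝ (insert v0 (Set.range w)))).Nonempty) :
    LinearMap.det (vertL d v0 w) ≠ 0 := by
  intro h0
  set L := vertL d v0 w with hL
  have hlt := LinearMap.range_lt_top_of_det_eq_zero h0
  have hsub : convexHull ℝ (insert v0 (Set.range w)) ⊆
      (fun q => v0 + q) '' (LinearMap.range L : Set (Fin d → ℝ)) := by
    apply convexHull_min
    · rintro u (rfl | ⟨i, rfl⟩)
      · exact ⟨0, Submodule.zero_mem _, by simp⟩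
      · refine ⟨L (Pi.single i 1), LinearMap.mem_range_self _ _, ?_⟩
        rw [hL, vertL_single]; ring_nf
    · exact (LinearMap.range L).convex.translate v0
  have h2 : (interior ((fun q => v0 + q) '' (LinearMap.range L : Set (Fin d → ℝ)))).Nonempty :=
    h.mono (interior_mono hsub)
  have h3 : (interior (LinearMap.range L : Set (Fin d → ℝ))).Nonempty := by
    have := (Homeomorph.addLeft v0).image_interior
        (s := (LinearMap.range L : Set (Fin d → ℝ)))
    rw [show ((Homeomorph.addLeft v0) '' interior (LinearMap.range L : Set (Fin d → ℝ)))
        = (fun q => v0 + q) '' interior (LinearMap.range L : Set (Fin d → ℝ)) from rfl] at this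
    rw [show ((Homeomorph.addLeft v0) '' (LinearMap.range L : Set (Fin d → ℝ)))
        = (fun q => v0 + q) '' (LinearMap.range L : Set (Fin d → ℝ)) from rfl] at this
    rw [← this] at h2
    exact h2.of_image
  exact hlt.ne (Submodule.eq_top_of_nonempty_interior' _ h3)

lemma measurable_vertAff (v0 : Fin d → ℝ) (w : Fin d → Fin d → ℝ) :
    Measurable (vertAff d v0 w) :=
  (vertAff d v0 w).continuous_of_finiteDimensional.measurable

lemma hull_compact (v0 : Fin d → ℝ) (w : Fin d → Fin d → ℝ) :
    IsCompact (convexHull ℝ (insert v0 (Set.range w))) :=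
  ((Set.finite_range w).insert v0).isCompact_convexHull ℝ

lemma stdCorner_compact : IsCompact (stdCorner d) :=
  ((Set.finite_range _).insert 0).isCompact_convexHull ℝ

lemma volume_image_eq (v0 : Fin d → ℝ) (w : Fin d → Fin d → ℝ) :
    volume (convexHull ℝ (insert v0 (Set.range w)))
      = ENNReal.ofReal |LinearMap.det (vertL d v0 w)| * volume (stdCorner d) := by
  rw [← image_stdCorner d v0 w]
  have himg : vertAff d v0 w '' stdCorner d
      = (fun q => v0 + q) '' (vertL d v0 w '' stdCorner d) :=
    (Set.image_image (fun q => v0 + q) (vertL d v0 w) (stdCorner d)).symm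
  have hpre : (fun q => v0 + q) '' (vertL d v0 w '' stdCorner d)
      = (fun q => -v0 + q) ⁻¹' (vertL d v0 w '' stdCorner d) :=
    congrFun (Set.image_eq_preimage_of_inverse
      (fun q => neg_add_cancel_left v0 q) (fun q => add_neg_cancel_left v0 q)) _
  rw [himg, hpre, measure_preimage_add, Measure.addHaar_image_linearMap]

lemma volume_stdCorner_pos (v0 : Fin d → ℝ) (w : Fin d → Fin d → ℝ)
    (h : (interior (convexHull ℝ (insert v0 (Set.range w)))).Nonempty) :
    volume (stdCorner d) ≠ 0 ∧ volume (stdCorner d) ≠ ⊤ := by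
  set S := convexHull ℝ (insert v0 (Set.range w))
  have hS0 : volume S ≠ 0 := by
    refine (lt_of_lt_of_le (isOpen_interior.measure_pos volume h)
      (measure_mono interior_subset)).ne'
  have hdet := det_ne_zero d v0 w h
  have hid := volume_image_eq d v0 w
  constructor
  · intro h0
    rw [h0, mul_zero] at hid
    exact hS0 hid
  · intro htop
    have hSfin : volume S ≠ ⊤ := (hull_compact d v0 w).measure_lt_top.ne
    rw [htop, ENNReal.mul_top (by simpa [abs_pos] using hdet)] at hid
    exact hSfin hid

lemma isProbability_uniform_stdCorner (v0 : Fin d → ℝ) (w : Fin d → Fin d → ℝ)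
    (h : (interior (convexHull ℝ (insert v0 (Set.range w)))).Nonempty) :
    IsProbabilityMeasure (uniformOnSet d (stdCorner d)) := by
  obtain ⟨h0, htop⟩ := volume_stdCorner_pos d v0 w h
  constructor
  rw [uniformOnSet, Measure.smul_apply, Measure.restrict_apply_univ, smul_eq_mul,
    ENNReal.inv_mul_cancel h0 htop]

lemma map_uniform (v0 : Fin d → ℝ) (w : Fin d → Fin d → ℝ)
    (h : (interior (convexHull ℝ (insert v0 (Set.range w)))).Nonempty) :
    (uniformOnSet d (stdCorner d)).map (vertAff d v0 w)
      = uniformOnSet d (convexHull ℝ (insert v0 (Set.range w))) := by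
  set S := convexHull ℝ (insert v0 (Set.range w)) with hSdef
  set L := vertL d v0 w with hLdef
  set F := vertAff d v0 w with hFdef
  have hdet : LinearMap.det L ≠ 0 := det_ne_zero d v0 w h
  have hFmeas : Measurable F := measurable_vertAff d v0 w
  have hLinj : Function.Injective L :=
    (LinearMap.equivOfDetNeZero L hdet).injective
  have hFinj : Function.Injective F := by
    intro p q hpq
    apply hLinj
    have : v0 + L p = v0 + L q := hpq
    exact add_left_cancel this
  have hSm : MeasurableSet S := (hull_compact d v0 w).isClosed.measurableSet
  have hpre : F ⁻¹' S = stdCorner d := by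
    rw [hSdef, ← image_stdCorner d v0 w, Set.preimage_image_eq _ hFinj]
  have hmapvol : volume.map F = ENNReal.ofReal |(LinearMap.det L)⁻¹| • volume := by
    have hcomp : (F : (Fin d → ℝ) → (Fin d → ℝ)) = (fun q => v0 + q) ∘ L := rfl
    rw [hcomp, ← Measure.map_map (measurable_const_add v0)
      L.continuous_of_finiteDimensional.measurable,
      Measure.map_linearMap_addHaar_eq_smul_addHaar volume hdet, Measure.map_smul,
      map_add_left_eq_self volume v0]
  have key : (volume.restrict (stdCorner d)).map F
      = ENNReal.ofReal |(LinearMap.det L)⁻¹| • volume.restrict S := by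
    rw [← hpre, ← Measure.restrict_map hFmeas hSm, hmapvol, Measure.restrict_smul]
  rw [uniformOnSet, Measure.map_smul, key, uniformOnSet, smul_smul]
  congr 1
  have habs : ENNReal.ofReal |(LinearMap.det L)⁻¹| = (ENNReal.ofReal |LinearMap.det L|)⁻¹ := by
    rw [abs_inv, ENNReal.ofReal_inv_of_pos (abs_pos.mpr hdet)]
  rw [habs, volume_image_eq d v0 w, ← hLdef, ENNReal.mul_inv (Or.inl (by simpa [abs_pos] using hdet))
    (Or.inl (by simp)), mul_comm]

end Aux

lemma cyclicShift_iterate_add (d : ℕ) [NeZero d] (x y : Fin d → ℝ) (n : ℕ) :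
    (cyclicShift d)^[n] (x + y) = (cyclicShift d)^[n] x + (cyclicShift d)^[n] y := by
  induction n with
  | zero => rfl
  | succ n ih =>
    rw [Function.iterate_succ_apply', Function.iterate_succ_apply',
      Function.iterate_succ_apply', ih]
    rfl

/-- If `a + b = c` and `x + y = z`, then the uniform distributions on the simplices
`Σ(a,x)`, `Σ(b,y)`, `Σ(c,z)` are compatible. -/
theorem stmt14 (d : ℕ) [NeZero d] (a b c : ℝ)
    (ha : a ∈ Set.Icc (0 : ℝ) d) (hb : b ∈ Set.Icc (0 : ℝ) d) (hc : c ∈ Set.Icc (0 : ℝ) d)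
    (habc : a + b = c)
    (x y z : Fin d → ℝ)
    (hx : ∀ i, x i ∈ Set.Icc (0 : ℝ) 1) (hy : ∀ i, y i ∈ Set.Icc (0 : ℝ) 1)
    (hz : ∀ i, z i ∈ Set.Icc (0 : ℝ) 1)
    (hxyz : x + y = z)
    (hax : (interior (simplexSet d a x)).Nonempty)
    (hby : (interior (simplexSet d b y)).Nonempty)
    (hcz : (interior (simplexSet d c z)).Nonempty) :
    Compatible (uniformOnSet d (simplexSet d a x)) (uniformOnSet d (simplexSet d b y))
      (uniformOnSet d (simplexSet d c z)) := by
  classical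
  set v0a : Fin d → ℝ := fun _ => a / d with hv0a
  set v0b : Fin d → ℝ := fun _ => b / d with hv0b
  set v0c : Fin d → ℝ := fun _ => c / d with hv0c
  set wa : Fin d → Fin d → ℝ := fun i => (cyclicShift d)^[(i : ℕ)] x with hwa
  set wb : Fin d → Fin d → ℝ := fun i => (cyclicShift d)^[(i : ℕ)] y with hwb
  set wc : Fin d → Fin d → ℝ := fun i => (cyclicShift d)^[(i : ℕ)] z with hwc
  have hSa : simplexSet d a x = convexHull ℝ (insert v0a (Set.range wa)) := rfl
  have hSb : simplexSet d b y = convexHull ℝ (insert v0b (Set.range wb)) := rfl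
  have hSc : simplexSet d c z = convexHull ℝ (insert v0c (Set.range wc)) := rfl
  rw [hSa] at hax; rw [hSb] at hby; rw [hSc] at hcz
  set Fa := vertAff d v0a wa
  set Fb := vertAff d v0b wb
  set Fc := vertAff d v0c wc
  have hv : v0a + v0b = v0c := by
    funext j
    show a / d + b / d = c / d
    rw [← add_div, habc]
  have hw : ∀ i, wa i + wb i = wc i := by
    intro i
    show (cyclicShift d)^[(i : ℕ)] x + (cyclicShift d)^[(i : ℕ)] y
        = (cyclicShift d)^[(i : ℕ)] z
    rw [← cyclicShift_iterate_add, hxyz]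
  have hsum : ∀ p, Fa p + Fb p = Fc p := by
    intro p
    show vertAff d v0a wa p + vertAff d v0b wb p = vertAff d v0c wc p
    rw [vertAff_apply, vertAff_apply, vertAff_apply, vertL_apply, vertL_apply, vertL_apply]
    have hterm : ∀ i : Fin d, p i • (wc i - v0c)
        = p i • (wa i - v0a) + p i • (wb i - v0b) := by
      intro i
      rw [← smul_add]
      congr 1
      rw [← hw i, ← hv]
      abel
    simp_rw [hterm]
    rw [Finset.sum_add_distrib, ← hv]
    abel
  set μD := uniformOnSet d (stdCorner d) with hμD
  haveI hprob : IsProbabilityMeasure μD := isProbability_uniform_stdCorner d v0a wa hax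
  set G : (Fin d → ℝ) → (Fin d → ℝ) × (Fin d → ℝ) × (Fin d → ℝ) :=
    fun p => (Fa p, Fb p, Fc p) with hG
  have hGa := measurable_vertAff d v0a wa
  have hGb := measurable_vertAff d v0b wb
  have hGc := measurable_vertAff d v0c wc
  have hGmeas : Measurable G := hGa.prodMk (hGb.prodMk hGc)
  refine ⟨μD.map G, ?_, ?_, ?_, ?_, ?_⟩
  · exact Measure.isProbabilityMeasure_map hGmeas.aemeasurable
  · rw [Measure.map_map measurable_fst hGmeas]
    have : (fun p : (Fin d → ℝ) × (Fin d → ℝ) × (Fin d → ℝ) => p.1) ∘ G = Fa := rfl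
    rw [this, hSa]
    exact map_uniform d v0a wa hax
  · have h1 : (fun p : (Fin d → ℝ) × (Fin d → ℝ) × (Fin d → ℝ) => p.2.1)
        = (Prod.fst ∘ Prod.snd) := rfl
    rw [h1, Measure.map_map (measurable_fst.comp measurable_snd) hGmeas]
    have : (Prod.fst ∘ Prod.snd : (Fin d → ℝ) × (Fin d → ℝ) × (Fin d → ℝ) → _) ∘ G = Fb := rfl
    rw [this, hSb]
    exact map_uniform d v0b wb hby
  · have h1 : (fun p : (Fin d → ℝ) × (Fin d → ℝ) × (Fin d → ℝ) => p.2.2)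
        = (Prod.snd ∘ Prod.snd) := rfl
    rw [h1, Measure.map_map (measurable_snd.comp measurable_snd) hGmeas]
    have : (Prod.snd ∘ Prod.snd : (Fin d → ℝ) × (Fin d → ℝ) × (Fin d → ℝ) → _) ∘ G = Fc := rfl
    rw [this, hSc]
    exact map_uniform d v0c wc hcz
  · have hset : MeasurableSet {p : (Fin d → ℝ) × (Fin d → ℝ) × (Fin d → ℝ) |
        p.1 + p.2.1 = p.2.2} := by
      exact measurableSet_eq_fun (measurable_fst.add (measurable_fst.comp measurable_snd))
        (measurable_snd.comp measurable_snd)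
    rw [MeasureTheory.ae_map_iff hGmeas.aemeasurable hset]
    exact Filter.Eventually.of_forall fun p => hsum p
end

section
/- Let S ⊆ {1,...,n}² be sum-free and suppose S contains a point v = (v₁, v₂) with v₁ + v₂ ≥ 17n/10. Then |S| ≤ (3/5)n² + O(n). -/
open Finset

lemma log_107 : Real.log (10/7) ≤ 5/14 := by
  rw [Real.log_le_iff_le_exp (by norm_num)]
  have h14 : ((10:ℝ)/7)^(14:ℕ) ≤ (Real.exp (5/14))^(14:ℕ) := by
    have : (Real.exp (5/14))^(14:ℕ) = Real.exp 5 := by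
      rw [← Real.exp_nat_mul]; norm_num
    rw [this]
    have h1 : (2.7182818283:ℝ)^(5:ℕ) ≤ (Real.exp 1)^(5:ℕ) := by
      apply pow_le_pow_left₀ (by norm_num) (le_of_lt Real.exp_one_gt_d9)
    have h2 : (Real.exp 1)^(5:ℕ) = Real.exp 5 := by
      rw [← Real.exp_nat_mul]; norm_num
    nlinarith [h1, h2]
  exact le_of_pow_le_pow_left₀ (by norm_num) (le_of_lt (Real.exp_pos _)) h14

lemma key_analytic (u : ℝ) (hu : 7/10 ≤ u) : u/2 - u * Real.log u ≤ 3/5 := by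
  have hu0 : 0 < u := by linarith
  have h1 : Real.log ((7/10)/u) ≤ (7/10)/u - 1 :=
    Real.log_le_sub_one_of_pos (by positivity)
  have h2 : Real.log ((7/10)/u) = Real.log (7/10) - Real.log u :=
    Real.log_div (by norm_num) (ne_of_gt hu0)
  have h3 : Real.log (7/10) = - Real.log (10/7) := by
    rw [← Real.log_inv]; norm_num
  -- log u ≥ log(7/10) + 1 - (7/10)/u ≥ -5/14 + 1 - 7/(10u)
  have h4 : - Real.log (10/7) + 1 - (7/10)/u ≤ Real.log u := by
    rw [h3] at h2; linarith
  have h5 : (-(5:ℝ)/14) + 1 - (7/10)/u ≤ Real.log u := by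
    have := log_107; linarith
  have h6 : u * ((-(5:ℝ)/14) + 1 - (7/10)/u) ≤ u * Real.log u :=
    mul_le_mul_of_nonneg_left h5 (le_of_lt hu0)
  have h7 : u * ((7/10)/u) = 7/10 := mul_div_cancel₀ _ (ne_of_gt hu0)
  nlinarith [h6, h7]

lemma harmonic_bound (a : ℤ) (ha : 1 ≤ a) :
    ∀ n : ℤ, a ≤ n → ∑ x ∈ Finset.Ioc a n, (1:ℝ)/x ≤ Real.log n - Real.log a := by
  refine Int.le_induction ?_ ?_
  · simp
  · intro n hn ih
    rw [← Finset.Ioc_union_Ioc_eq_Ioc hn (by omega : n ≤ n+1)]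
    rw [Finset.sum_union (by rw [Finset.disjoint_left]; intro x hx hx'; simp at hx hx'; omega)]
    have hstep : ∑ x ∈ Finset.Ioc n (n+1), (1:ℝ)/x = 1/((n:ℝ)+1) := by
      rw [show Finset.Ioc n (n+1) = {n+1} by ext x; simp; omega]
      push_cast [Finset.sum_singleton]; ring
    have hn1 : (1:ℝ) ≤ (n:ℝ) := by exact_mod_cast le_trans ha hn
    have hlog : 1/((n:ℝ)+1) ≤ Real.log ((n:ℝ)+1) - Real.log n := by
      have hp : (0:ℝ) < n := by linarith
      have h := Real.log_le_sub_one_of_pos (show (0:ℝ) < n/(n+1) by positivity)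
      rw [Real.log_div (by linarith) (by linarith)] at h
      have he : (n:ℝ)/(n+1) - 1 = -(1/(n+1)) := by field_simp; ring
      rw [he] at h
      linarith
    push_cast
    linarith [ih]

lemma fin2_inj : Function.Injective (fun p : Fin 2 → ℤ => (p 0, p 1)) := by
  intro p q h
  simp only [Prod.mk.injEq] at h
  funext i
  fin_cases i <;> simp [h.1, h.2]

set_option maxHeartbeats 1000000 in
/-- If a sum-free `S ⊆ {1,…,n}²` contains a point `v` with `v₁ + v₂ ≥ 17n/10`, then
`|S| ≤ (3/5)n² + O(n)`. -/
theorem stmt17 : ∃ C : ℝ, ∀ n : ℕ, ∀ S : Finset (Fin 2 → ℤ),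
    (∀ v ∈ S, ∀ i, 1 ≤ v i ∧ v i ≤ (n : ℤ)) →
    (∀ x ∈ S, ∀ y ∈ S, ∀ z ∈ S, x + y ≠ z) →
    (∃ v ∈ S, (17 : ℝ) * n / 10 ≤ (v 0 : ℝ) + (v 1 : ℝ)) →
    (S.card : ℝ) ≤ 3 / 5 * (n : ℝ) ^ 2 + C * n := by
  use 2
  intro n S hbox hsf hex
  obtain ⟨v, hvS, hvsum⟩ := hex
  have hv0 := hbox v hvS 0
  have hv1 := hbox v hvS 1
  have hn1 : (1:ℤ) ≤ (n:ℤ) := le_trans hv0.1 hv0.2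
  have hn1R : (1:ℝ) ≤ (n:ℝ) := by exact_mod_cast hn1
  have hn0R : (0:ℝ) < (n:ℝ) := by linarith
  obtain ⟨w, hwS, hwmax⟩ := S.exists_max_image (fun p => p 0 * p 1) ⟨v, hvS⟩
  set a : ℤ := w 0 with ha_def
  set b : ℤ := w 1 with hb_def
  set P : ℤ := a * b with hP_def
  have hw0 := hbox w hwS 0
  have hw1 := hbox w hwS 1
  have ha1 : 1 ≤ a := hw0.1
  have han : a ≤ n := hw0.2
  have hb1 : 1 ≤ b := hw1.1
  have hbn : b ≤ n := hw1.2
  have hP1 : 1 ≤ P := one_le_mul_of_one_le_of_one_le ha1 hb1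
  have hPn : (P:ℝ) ≤ (n:ℝ)^2 := by
    have h : P ≤ (n:ℤ) * n := mul_le_mul han hbn (by linarith) (by linarith)
    have : (P:ℝ) ≤ (n:ℝ) * n := by exact_mod_cast h
    nlinarith
  have hP7 : (7:ℝ)/10 * (n:ℝ)^2 ≤ (P:ℝ) := by
    have hvP : v 0 * v 1 ≤ P := hwmax v hvS
    have h1 : ((v 0 : ℤ):ℝ) ≤ n := by exact_mod_cast hv0.2
    have h2 : ((v 1 : ℤ):ℝ) ≤ n := by exact_mod_cast hv1.2
    have h3 : ((v 0 * v 1 : ℤ):ℝ) ≤ (P:ℝ) := by exact_mod_cast hvP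
    push_cast at h3 ⊢
    nlinarith [mul_nonneg (sub_nonneg.2 h1) (sub_nonneg.2 h2), hvsum]
  -- split S
  set S1 := S.filter (fun p => p 0 ≤ a ∧ p 1 ≤ b) with hS1
  set Sa := S.filter (fun p => a < p 0) with hSa
  set Sb := S.filter (fun p => b < p 1) with hSb
  have hsplit : S.card ≤ S1.card + Sa.card + Sb.card := by
    have hsub : S ⊆ (S1 ∪ Sa) ∪ Sb := by
      intro p hp
      simp only [Finset.mem_union, hS1, hSa, hSb, Finset.mem_filter]
      by_cases h0 : p 0 ≤ a
      · by_cases h1 : p 1 ≤ b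
        · exact Or.inl (Or.inl ⟨hp, h0, h1⟩)
        · exact Or.inr ⟨hp, by omega⟩
      · exact Or.inl (Or.inr ⟨hp, by omega⟩)
    calc S.card ≤ ((S1 ∪ Sa) ∪ Sb).card := Finset.card_le_card hsub
      _ ≤ (S1 ∪ Sa).card + Sb.card := Finset.card_union_le _ _
      _ ≤ (S1.card + Sa.card) + Sb.card := by
          have := Finset.card_union_le S1 Sa; omega
  -- Claim A : pairing bound
  have hA : (S1.card : ℝ) * 2 ≤ ((a:ℝ)+1) * ((b:ℝ)+1) := by
    classical
    set e : (Fin 2 → ℤ) → ℤ × ℤ := fun p => (p 0, p 1) with he_def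
    set f : (Fin 2 → ℤ) → ℤ × ℤ := fun p => (a - p 0, b - p 1) with hf_def
    have hfinj : Function.Injective f := by
      intro p q h
      simp only [hf_def, Prod.mk.injEq] at h
      apply fin2_inj
      simp only [Prod.mk.injEq]
      omega
    have hecard : (S1.image e).card = S1.card :=
      Finset.card_image_of_injective _ fin2_inj
    have hfcard : (S1.image f).card = S1.card :=
      Finset.card_image_of_injective _ hfinj
    have hS1mem : ∀ p ∈ S1, p ∈ S ∧ p 0 ≤ a ∧ p 1 ≤ b := by
      intro p hp; simpa [hS1, Finset.mem_filter] using hp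
    have hsub1 : S1.image e ⊆ Finset.Icc (0:ℤ) a ×ˢ Finset.Icc (0:ℤ) b := by
      intro x hx
      obtain ⟨p, hp, rfl⟩ := Finset.mem_image.1 hx
      obtain ⟨hpS, hp0, hp1⟩ := hS1mem p hp
      have h0 := hbox p hpS 0
      have h1 := hbox p hpS 1
      simp only [he_def, Finset.mem_product, Finset.mem_Icc]
      omega
    have hsub2 : S1.image f ⊆ Finset.Icc (0:ℤ) a ×ˢ Finset.Icc (0:ℤ) b := by
      intro x hx
      obtain ⟨p, hp, rfl⟩ := Finset.mem_image.1 hx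
      obtain ⟨hpS, hp0, hp1⟩ := hS1mem p hp
      have h0 := hbox p hpS 0
      have h1 := hbox p hpS 1
      simp only [hf_def, Finset.mem_product, Finset.mem_Icc]
      omega
    have hdisj : Disjoint (S1.image e) (S1.image f) := by
      rw [Finset.disjoint_left]
      rintro x hx hx'
      obtain ⟨p, hp, rfl⟩ := Finset.mem_image.1 hx
      obtain ⟨q, hq, hqe⟩ := Finset.mem_image.1 hx'
      obtain ⟨hpS, _, _⟩ := hS1mem p hp
      obtain ⟨hqS, _, _⟩ := hS1mem q hq
      simp only [hf_def, he_def, Prod.mk.injEq] at hqe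
      have hqw : q + p = w := by
        funext i
        fin_cases i
        · show q 0 + p 0 = w 0; omega
        · show q 1 + p 1 = w 1; omega
      exact hsf q hqS p hpS w hwS hqw
    have hcards : S1.card * 2 ≤ ((a+1).toNat * (b+1).toNat) := by
      have h1 : (S1.image e ∪ S1.image f).card = S1.card * 2 := by
        rw [Finset.card_union_of_disjoint hdisj, hecard, hfcard]; omega
      have h2 : (S1.image e ∪ S1.image f) ⊆ Finset.Icc (0:ℤ) a ×ˢ Finset.Icc (0:ℤ) b :=
        Finset.union_subset hsub1 hsub2
      have h3 := Finset.card_le_card h2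
      rw [h1] at h3
      simpa [Finset.card_product, Int.card_Icc] using h3
    have hcast : (((a+1).toNat * (b+1).toNat : ℕ) : ℝ) = ((a:ℝ)+1) * ((b:ℝ)+1) := by
      have l1 : (((a+1).toNat : ℕ) : ℝ) = (a:ℝ)+1 := by
        have h := Int.toNat_of_nonneg (show (0:ℤ) ≤ a+1 by omega)
        exact_mod_cast congrArg (Int.cast : ℤ → ℝ) h
      have l2 : (((b+1).toNat : ℕ) : ℝ) = (b:ℝ)+1 := by
        have h := Int.toNat_of_nonneg (show (0:ℤ) ≤ b+1 by omega)
        exact_mod_cast congrArg (Int.cast : ℤ → ℝ) h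
      rw [Nat.cast_mul, l1, l2]
    calc (S1.card : ℝ) * 2 = ((S1.card * 2 : ℕ) : ℝ) := by push_cast; ring
      _ ≤ (((a+1).toNat * (b+1).toNat : ℕ) : ℝ) := by exact_mod_cast hcards
      _ = ((a:ℝ)+1) * ((b:ℝ)+1) := hcast
  -- Claim B
  have hB : (Sa.card : ℝ) ≤ (P:ℝ) * (Real.log n - Real.log a) := by
    classical
    have hmem : ∀ p ∈ Sa, p 0 ∈ Finset.Ioc a (n:ℤ) := by
      intro p hp
      rw [hSa, Finset.mem_filter] at hp
      simp only [Finset.mem_Ioc]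
      exact ⟨hp.2, (hbox p hp.1 0).2⟩
    have hfib : Sa.card = ∑ x ∈ Finset.Ioc a (n:ℤ), (Sa.filter (fun p => p 0 = x)).card :=
      Finset.card_eq_sum_card_fiberwise hmem
    have hfibR : ∀ x ∈ Finset.Ioc a (n:ℤ),
        ((Sa.filter (fun p => p 0 = x)).card : ℝ) ≤ (P:ℝ) * (1/(x:ℝ)) := by
      intro x hx
      rw [Finset.mem_Ioc] at hx
      have hx0 : (0:ℤ) < x := by linarith [hx.1]
      have hcard : (Sa.filter (fun p => p 0 = x)).card ≤ (Finset.Icc (1:ℤ) (P/x)).card := by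
        apply Finset.card_le_card_of_injOn (fun p => p 1)
        · intro p hp
          rw [Finset.mem_coe, Finset.mem_filter, hSa, Finset.mem_filter] at hp
          obtain ⟨⟨hpS, _⟩, hpx⟩ := hp
          rw [Finset.mem_coe, Finset.mem_Icc]
          refine ⟨(hbox p hpS 1).1, ?_⟩
          rw [Int.le_ediv_iff_mul_le hx0]
          calc p 1 * x = p 0 * p 1 := by subst hpx; ring
            _ ≤ P := hwmax p hpS
        · intro p hp q hq h
          rw [Finset.mem_coe, Finset.mem_filter] at hp hq
          apply fin2_inj
          simp only [Prod.mk.injEq]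
          exact ⟨hp.2.trans hq.2.symm, h⟩
      have hdiv0 : (0:ℤ) ≤ P / x := Int.ediv_nonneg (by linarith [hP1]) (le_of_lt hx0)
      have hIcc : ((Finset.Icc (1:ℤ) (P/x)).card : ℝ) = ((P/x : ℤ) : ℝ) := by
        rw [Int.card_Icc]
        have : (P/x + 1 - 1 : ℤ) = P/x := by ring
        rw [this]
        exact_mod_cast congrArg (Int.cast : ℤ → ℝ) (Int.toNat_of_nonneg hdiv0)
      have hdm : ((P/x : ℤ) : ℝ) ≤ (P:ℝ) * (1/(x:ℝ)) := by
        have h2 : (P/x) * x ≤ P := Int.ediv_mul_le P (ne_of_gt hx0)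
        have h2R : ((P/x : ℤ) : ℝ) * (x:ℝ) ≤ (P:ℝ) := by exact_mod_cast h2
        have hxR : (0:ℝ) < (x:ℝ) := by exact_mod_cast hx0
        rw [mul_one_div, le_div_iff₀ hxR]
        exact h2R
      calc ((Sa.filter (fun p => p 0 = x)).card : ℝ)
          ≤ ((Finset.Icc (1:ℤ) (P/x)).card : ℝ) := by exact_mod_cast hcard
        _ = ((P/x : ℤ) : ℝ) := hIcc
        _ ≤ (P:ℝ) * (1/(x:ℝ)) := hdm
    have hPR0 : (0:ℝ) ≤ (P:ℝ) := by exact_mod_cast le_of_lt (lt_of_lt_of_le zero_lt_one hP1)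
    calc (Sa.card : ℝ) = ∑ x ∈ Finset.Ioc a (n:ℤ), ((Sa.filter (fun p => p 0 = x)).card : ℝ) := by
          exact_mod_cast hfib
      _ ≤ ∑ x ∈ Finset.Ioc a (n:ℤ), (P:ℝ) * (1/(x:ℝ)) := Finset.sum_le_sum hfibR
      _ = (P:ℝ) * ∑ x ∈ Finset.Ioc a (n:ℤ), (1:ℝ)/(x:ℝ) := by rw [Finset.mul_sum]
      _ ≤ (P:ℝ) * (Real.log n - Real.log a) := by
          apply mul_le_mul_of_nonneg_left (harmonic_bound a ha1 n han) hPR0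
  have hC : (Sb.card : ℝ) ≤ (P:ℝ) * (Real.log n - Real.log b) := by
    classical
    have hmem : ∀ p ∈ Sb, p 1 ∈ Finset.Ioc b (n:ℤ) := by
      intro p hp
      rw [hSb, Finset.mem_filter] at hp
      simp only [Finset.mem_Ioc]
      exact ⟨hp.2, (hbox p hp.1 1).2⟩
    have hfib : Sb.card = ∑ x ∈ Finset.Ioc b (n:ℤ), (Sb.filter (fun p => p 1 = x)).card :=
      Finset.card_eq_sum_card_fiberwise hmem
    have hfibR : ∀ x ∈ Finset.Ioc b (n:ℤ),
        ((Sb.filter (fun p => p 1 = x)).card : ℝ) ≤ (P:ℝ) * (1/(x:ℝ)) := by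
      intro x hx
      rw [Finset.mem_Ioc] at hx
      have hx0 : (0:ℤ) < x := by linarith [hx.1]
      have hcard : (Sb.filter (fun p => p 1 = x)).card ≤ (Finset.Icc (1:ℤ) (P/x)).card := by
        apply Finset.card_le_card_of_injOn (fun p => p 0)
        · intro p hp
          rw [Finset.mem_coe, Finset.mem_filter, hSb, Finset.mem_filter] at hp
          obtain ⟨⟨hpS, _⟩, hpx⟩ := hp
          rw [Finset.mem_coe, Finset.mem_Icc]
          refine ⟨(hbox p hpS 0).1, ?_⟩
          rw [Int.le_ediv_iff_mul_le hx0]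
          calc p 0 * x = p 0 * p 1 := by subst hpx; ring
            _ ≤ P := hwmax p hpS
        · intro p hp q hq h
          rw [Finset.mem_coe, Finset.mem_filter] at hp hq
          apply fin2_inj
          simp only [Prod.mk.injEq]
          exact ⟨h, hp.2.trans hq.2.symm⟩
      have hdiv0 : (0:ℤ) ≤ P / x := Int.ediv_nonneg (by linarith [hP1]) (le_of_lt hx0)
      have hIcc : ((Finset.Icc (1:ℤ) (P/x)).card : ℝ) = ((P/x : ℤ) : ℝ) := by
        rw [Int.card_Icc]
        have : (P/x + 1 - 1 : ℤ) = P/x := by ring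
        rw [this]
        exact_mod_cast congrArg (Int.cast : ℤ → ℝ) (Int.toNat_of_nonneg hdiv0)
      have hdm : ((P/x : ℤ) : ℝ) ≤ (P:ℝ) * (1/(x:ℝ)) := by
        have h2 : (P/x) * x ≤ P := Int.ediv_mul_le P (ne_of_gt hx0)
        have h2R : ((P/x : ℤ) : ℝ) * (x:ℝ) ≤ (P:ℝ) := by exact_mod_cast h2
        have hxR : (0:ℝ) < (x:ℝ) := by exact_mod_cast hx0
        rw [mul_one_div, le_div_iff₀ hxR]
        exact h2R
      calc ((Sb.filter (fun p => p 1 = x)).card : ℝ)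
          ≤ ((Finset.Icc (1:ℤ) (P/x)).card : ℝ) := by exact_mod_cast hcard
        _ = ((P/x : ℤ) : ℝ) := hIcc
        _ ≤ (P:ℝ) * (1/(x:ℝ)) := hdm
    have hPR0 : (0:ℝ) ≤ (P:ℝ) := by exact_mod_cast le_of_lt (lt_of_lt_of_le zero_lt_one hP1)
    calc (Sb.card : ℝ) = ∑ x ∈ Finset.Ioc b (n:ℤ), ((Sb.filter (fun p => p 1 = x)).card : ℝ) := by
          exact_mod_cast hfib
      _ ≤ ∑ x ∈ Finset.Ioc b (n:ℤ), (P:ℝ) * (1/(x:ℝ)) := Finset.sum_le_sum hfibR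
      _ = (P:ℝ) * ∑ x ∈ Finset.Ioc b (n:ℤ), (1:ℝ)/(x:ℝ) := by rw [Finset.mul_sum]
      _ ≤ (P:ℝ) * (Real.log n - Real.log b) := by
          apply mul_le_mul_of_nonneg_left (harmonic_bound b hb1 n hbn) hPR0
  -- final arithmetic
  have hPR : (0:ℝ) < (P:ℝ) := by exact_mod_cast lt_of_lt_of_le zero_lt_one hP1
  have hPab : (P:ℝ) = (a:ℝ) * b := by push_cast [hP_def]; ring
  have haR : (1:ℝ) ≤ (a:ℝ) := by exact_mod_cast ha1
  have hbR : (1:ℝ) ≤ (b:ℝ) := by exact_mod_cast hb1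
  have hanR : (a:ℝ) ≤ n := by exact_mod_cast han
  have hbnR : (b:ℝ) ≤ n := by exact_mod_cast hbn
  have hloga : Real.log a + Real.log b = Real.log P := by
    rw [hPab, Real.log_mul (by linarith) (by linarith)]
  set u : ℝ := (P:ℝ)/(n:ℝ)^2 with hu_def
  have hn2 : (0:ℝ) < (n:ℝ)^2 := by positivity
  have hu7 : 7/10 ≤ u := by rw [hu_def, le_div_iff₀ hn2]; linarith
  have hun : (n:ℝ)^2 * u = (P:ℝ) := by rw [hu_def]; field_simp
  have hlogu : Real.log u = Real.log P - 2 * Real.log n := by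
    rw [hu_def, Real.log_div (ne_of_gt hPR) (ne_of_gt hn2), Real.log_pow]
    push_cast; ring
  have key := key_analytic u hu7
  have e2 : (P:ℝ)*(Real.log n - Real.log a) + (P:ℝ)*(Real.log n - Real.log b)
      = (n:ℝ)^2 * (-(u * Real.log u)) := by
    have h1 : (P:ℝ)*(Real.log n - Real.log a) + (P:ℝ)*(Real.log n - Real.log b)
        = (P:ℝ) * (2*Real.log n - Real.log P) := by rw [← hloga]; ring
    rw [h1, hlogu, ← hun]; ring
  have hsplitR : (S.card:ℝ) ≤ (S1.card:ℝ) + Sa.card + Sb.card := by exact_mod_cast hsplit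
  have hAB : ((a:ℝ)+1)*((b:ℝ)+1) ≤ (P:ℝ) + 2*(n:ℝ) + 1 := by rw [hPab]; nlinarith
  have hP2 : (n:ℝ)^2 * (u/2) = (P:ℝ)/2 := by rw [← hun]; ring
  have hfinal : (S.card:ℝ) ≤ (n:ℝ)^2 * (u/2 - u * Real.log u) + (n:ℝ) + 1/2 := by
    linarith [hA, hB, hC, e2, hP2, hsplitR, hAB]
  have hkey2 : (n:ℝ)^2 * (u/2 - u*Real.log u) ≤ (n:ℝ)^2 * (3/5) :=
    mul_le_mul_of_nonneg_left key (le_of_lt hn2)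
  linarith [hfinal, hkey2, hn1R]
end
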